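/- arXiv:1601.06504 — 14 statements merged into one kernel-verified Lean document; each statement's English description precedes it below -/
import Mathlib

section
/- Let M=(S,P,I,AP,L) be a finite generalized possibilistic Kripke structure. Then for every state s ∈ S, r_P(s) = sup_{t ∈ S} ( P⁺(s,t) ∧ P⁺(t,t) ), where r_P(s) = sup{ inf_{i≥0} P(s_i,s_{i+1}) : s₀ = s, s_i ∈ S for all i ≥ 1 } and P⁺ is the max–min transitive closure of P. -/
open unitInterval

instance : Fact ((0:ℝ) ≤ 1) := ⟨zero_le_one⟩

open Classical in
/-- The identity fuzzy matrix `P⁰`. -/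
noncomputable def matId {S : Type*} : S → S → unitInterval :=
  fun s t => if s = t then 1 else 0

/-- Max–min composition of fuzzy matrices: `(A∘B)(s,t) = sup_u A(s,u) ∧ B(u,t)`. -/
noncomputable def matComp {S : Type*} (A B : S → S → unitInterval) : S → S → unitInterval :=
  fun s t => ⨆ u, A s u ⊓ B u t

/-- `k`-th max–min power of a fuzzy matrix (`A⁰` is the identity matrix). -/
noncomputable def matPow {S : Type*} (A : S → S → unitInterval) : ℕ → S → S → unitInterval
  | 0 => matId
  | n + 1 => matComp (matPow A n) A

/-- Transitive closure `A⁺ = sup_{k ≥ 1} Aᵏ`. -/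
noncomputable def transClos {S : Type*} (A : S → S → unitInterval) : S → S → unitInterval :=
  fun s t => ⨆ k, matPow A (k + 1) s t

/-- Reflexive–transitive closure `A* = A⁰ ∨ A⁺ = sup_{k ≥ 0} Aᵏ`. -/
noncomputable def reflTransClos {S : Type*} (A : S → S → unitInterval) : S → S → unitInterval :=
  fun s t => ⨆ k, matPow A k s t

open Classical in
/-- The diagonal fuzzy matrix `D_B` of a fuzzy state `B`. -/
noncomputable def diagMat {S : Type*} (B : S → unitInterval) : S → S → unitInterval :=
  fun s t => if s = t then B s else 0

/-- Max–min application of a fuzzy matrix to a fuzzy vector. -/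
noncomputable def matVec {S : Type*} (A : S → S → unitInterval) (v : S → unitInterval) :
    S → unitInterval :=
  fun s => ⨆ t, A s t ⊓ v t

/-- `r_P(s) = sup { inf_{i≥0} P(s_i, s_{i+1}) : s₀ = s }`. -/
noncomputable def rP {S : Type*} (P : S → S → unitInterval) : S → unitInterval :=
  fun s => ⨆ (π : ℕ → S) (_ : π 0 = s), ⨅ i, P (π i) (π (i + 1))

/-- The possibility `Po(s ⊨ Φ)` of a fuzzy path property `Φ` at a state `s`:
`sup_{π ∈ S^ω, π₀ = s} ( inf_{i≥0} P(π_i,π_{i+1}) ∧ Φ(π) )`. -/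
noncomputable def Po {S : Type*} (P : S → S → unitInterval) (Φ : (ℕ → S) → unitInterval)
    (s : S) : unitInterval :=
  ⨆ (π : ℕ → S) (_ : π 0 = s), (⨅ i, P (π i) (π (i + 1))) ⊓ Φ π

/-- The generalized possibility measure of a set of infinite state sequences:
`Po(E) = sup_{π ∈ E} ( I(π₀) ∧ inf_{i≥0} P(π_i,π_{i+1}) )`. -/
noncomputable def PoSet {S : Type*} (P : S → S → unitInterval) (Init : S → unitInterval)
    (E : Set (ℕ → S)) : unitInterval :=
  ⨆ π ∈ E, Init (π 0) ⊓ ⨅ i, P (π i) (π (i + 1))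

lemma le_matPow {S : Type*} (P : S → S → unitInterval) (π : ℕ → S) :
    ∀ k, (⨅ i, P (π i) (π (i+1))) ≤ matPow P k (π 0) (π k)
  | 0 => by
    simp only [matPow, matId, if_pos rfl]
    exact le_trans (iInf_le _ 0) unitInterval.le_one'
  | (k+1) => by
    have h1 := le_matPow P π k
    calc (⨅ i, P (π i) (π (i+1))) ≤ matPow P k (π 0) (π k) ⊓ P (π k) (π (k+1)) :=
          le_inf h1 (iInf_le _ k)
      _ ≤ matPow P (k+1) (π 0) (π (k+1)) := le_iSup_of_le (π k) le_rfl

lemma exists_path {S : Type*} [Fintype S] [Nonempty S] (P : S → S → unitInterval) :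
    ∀ (k : ℕ) (s t : S), ∃ f : ℕ → S, f 0 = s ∧ f (k+1) = t ∧
      matPow P (k+1) s t ≤ ⨅ i : Fin (k+1), P (f i) (f (i+1)) := by
  intro k
  induction k with
  | zero =>
    intro s t
    refine ⟨fun n => if n = 0 then s else t, by simp, by simp, ?_⟩
    have : matPow P 1 s t ≤ P s t := by
      refine iSup_le fun u => ?_
      by_cases h : s = u
      · subst h; exact inf_le_right
      · refine le_trans inf_le_left ?_
        simp only [matPow, matId, if_neg h]
        exact unitInterval.nonneg'
    simpa using this
  | succ k ih =>
    intro s t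
    obtain ⟨u, hu⟩ := Finite.exists_max (fun u => matPow P (k+1) s u ⊓ P u t)
    obtain ⟨f, hf0, hfk, hfb⟩ := ih s u
    refine ⟨fun n => if n ≤ k+1 then f n else t, by simpa using hf0, by simp, ?_⟩
    have hpow : matPow P (k+2) s t ≤ matPow P (k+1) s u ⊓ P u t := iSup_le hu
    refine le_iInf fun i => ?_
    rcases lt_or_eq_of_le (Nat.lt_succ_iff.mp i.2) with h | h
    · -- i.val < k+1
      have h1 : (i : ℕ) ≤ k + 1 := le_of_lt h
      have h2 : (i : ℕ) + 1 ≤ k + 1 := h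
      simp only [h1, h2, if_pos]
      exact le_trans hpow (le_trans inf_le_left (le_trans hfb (iInf_le _ (⟨i, h⟩ : Fin (k+1)))))
    · -- i.val = k+1
      have h1 : (i : ℕ) ≤ k + 1 := le_of_eq h
      have h2 : ¬ ((i : ℕ) + 1 ≤ k + 1) := by omega
      simp only [h1, h2, if_pos, if_neg, not_false_iff]
      rw [h, hfk]
      exact le_trans hpow inf_le_right

theorem rP_aux {S : Type*} [Fintype S] [Nonempty S]
    (P : S → S → unitInterval) (s : S) :
    rP P s = ⨆ t : S, transClos P s t ⊓ transClos P t t := by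
  refine le_antisymm ?_ ?_
  · -- ≤
    refine iSup_le fun π => iSup_le fun hπ => ?_
    set v := ⨅ i, P (π i) (π (i + 1)) with hv
    have key : ∀ a b : ℕ, a < b → π (a+1) = π (b+1) →
        v ≤ ⨆ t : S, transClos P s t ⊓ transClos P t t := by
      intro a b hab heq
      set t := π (a+1) with ht
      have h1 : v ≤ transClos P s t := by
        have h := le_matPow P π (a+1)
        rw [hπ] at h
        exact le_trans h (le_iSup (fun k => matPow P (k+1) s t) a)
      have h2 : v ≤ transClos P t t := by
        have hvs : v ≤ ⨅ n, P (π (a+1+n)) (π (a+1+n+1)) :=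
          le_iInf fun n => iInf_le (fun i => P (π i) (π (i+1))) (a+1+n)
        have h := le_trans hvs (le_matPow P (fun n => π (a+1+n)) (b-a))
        have hs0 : π (a+1+0) = t := rfl
        have hsb : π (a+1+(b-a)) = t := by
          have hab' : a+1+(b-a) = b+1 := by omega
          rw [hab']; exact heq.symm
        rw [hs0, hsb] at h
        have hba : b - a = (b-a-1) + 1 := by omega
        rw [hba] at h
        exact le_trans h (le_iSup (fun k => matPow P (k+1) t t) (b-a-1))
      exact le_trans (le_inf h1 h2) (le_iSup (fun u => transClos P s u ⊓ transClos P u u) t)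
    obtain ⟨a, b, hne, heq⟩ :=
      Finite.exists_ne_map_eq_of_infinite (fun n : ℕ => π (n+1))
    rcases hne.lt_or_gt with h | h
    · exact key a b h heq
    · exact key b a h heq.symm
  · -- ≥
    refine iSup_le fun t => ?_
    rw [transClos, transClos, iSup_inf_eq]
    refine iSup_le fun k => ?_
    rw [inf_iSup_eq]
    refine iSup_le fun m => ?_
    obtain ⟨f, hf0, hfk, hfb⟩ := exists_path P k s t
    obtain ⟨g, hg0, hgm, hgb⟩ := exists_path P m t t
    set π : ℕ → S := fun n => if n ≤ k then f n else g ((n - (k+1)) % (m+1)) with hπ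
    have hπ0 : π 0 = s := by simp [hπ, hf0]
    set C := matPow P (k+1) s t ⊓ matPow P (m+1) t t with hC
    have hCA : C ≤ ⨅ i : Fin (k+1), P (f i) (f (i+1)) := le_trans inf_le_left hfb
    have hCB : C ≤ ⨅ i : Fin (m+1), P (g i) (g (i+1)) := le_trans inf_le_right hgb
    have hedge : ∀ n, C ≤ P (π n) (π (n+1)) := by
      intro n
      by_cases h : n ≤ k
      · have hn : π n = f n := if_pos h
        have hn1 : π (n+1) = f (n+1) := by
          by_cases h' : n + 1 ≤ k
          · exact if_pos h'
          · have hnk : n = k := by omega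
            have : π (n+1) = g ((n+1 - (k+1)) % (m+1)) := if_neg h'
            rw [this, hnk]
            simp [hg0, hfk]
        rw [hn, hn1]
        exact le_trans hCA (iInf_le _ (⟨n, by omega⟩ : Fin (k+1)))
      · set a := n - (k+1) with ha
        set r := a % (m+1) with hr
        have hrm : r < m + 1 := Nat.mod_lt _ (Nat.succ_pos m)
        have hn : π n = g r := if_neg h
        have hmod : (a+1) % (m+1) = (r+1) % (m+1) := by
          have hd := Nat.mod_add_div a (m+1)
          have : a + 1 = (r + 1) + (m+1) * (a / (m+1)) := by omega
          rw [this, Nat.add_mul_mod_self_left]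
        have hn1 : π (n+1) = g ((r+1) % (m+1)) := by
          have h' : ¬ (n + 1 ≤ k) := by omega
          have : π (n+1) = g ((n+1 - (k+1)) % (m+1)) := if_neg h'
          have he : n + 1 - (k+1) = a + 1 := by omega
          rw [this, he, hmod]
        by_cases hrm' : r = m
        · have : (r+1) % (m+1) = 0 := by rw [hrm']; exact Nat.mod_self _
          rw [hn, hn1, this, hrm']
          have hgg : g 0 = g (m+1) := by rw [hg0, hgm]
          rw [hgg]
          exact le_trans hCB (iInf_le _ (⟨m, by omega⟩ : Fin (m+1)))
        · have hlt : r + 1 < m + 1 := by omega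
          rw [hn, hn1, Nat.mod_eq_of_lt hlt]
          exact le_trans hCB (iInf_le _ (⟨r, hrm⟩ : Fin (m+1)))
    exact le_iSup_of_le π (le_iSup_of_le hπ0 (le_iInf hedge))

/-- For a finite GPKS `M = (S, P, Init, AP, L)`,
`r_P(s) = sup_{t ∈ S} ( P⁺(s,t) ∧ P⁺(t,t) )` for every state `s`. -/
theorem rP_eq_sup_transClos {S : Type*} [Fintype S] [Nonempty S]
    {AP : Type*} [Fintype AP]
    (P : S → S → unitInterval) (Init : S → unitInterval) (L : S → AP → unitInterval)
    (s : S) :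
    rP P s = ⨆ t : S, transClos P s t ⊓ transClos P t t := by
  exact rP_aux P s
end

section
/- Let M=(S,P,I,AP,L) be a finite generalized possibilistic Kripke structure. Then P is normal, i.e. sup_{t∈S} P(s,t) = 1 for every state s, if and only if r_P(s) = 1 for every state s ∈ S. -/
open unitInterval

/-- For a finite GPKS `M = (S, P, Init, AP, L)`, `P` is normal
(`sup_{t∈S} P(s,t) = 1` for every `s`) iff `r_P(s) = 1` for every state `s`. -/
theorem normal_iff_rP_eq_one {S : Type*} [Fintype S] [Nonempty S]
    {AP : Type*} [Fintype AP]
    (P : S → S → unitInterval) (Init : S → unitInterval) (L : S → AP → unitInterval) :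
    (∀ s : S, (⨆ t : S, P s t) = 1) ↔ (∀ s : S, rP P s = 1) := by
  constructor
  · intro h
    have hx : ∀ s : S, ∃ t : S, P s t = 1 := by
      intro s
      obtain ⟨t, ht⟩ := Finite.exists_max (P s)
      exact ⟨t, le_antisymm (P s t).2.2 ((h s) ▸ iSup_le ht)⟩
    choose f hf using hx
    intro s
    have key : ∀ n, P ((f^[n]) s) ((f^[n+1]) s) = 1 := by
      intro n
      rw [Function.iterate_succ_apply']
      exact hf _
    refine le_antisymm (rP P s).2.2 ?_
    have h0 : (f^[0]) s = s := rfl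
    calc (1 : unitInterval) ≤ ⨅ i, P ((f^[i]) s) ((f^[i+1]) s) :=
            le_iInf fun i => (key i).ge
      _ ≤ rP P s := by
            refine le_trans ?_ (le_iSup _ (fun n => (f^[n]) s))
            exact le_iSup_of_le h0 le_rfl
  · intro h s
    refine le_antisymm (iSup_le fun t => (P s t).2.2) ?_
    calc (1 : unitInterval) = rP P s := (h s).symm
      _ ≤ ⨆ t : S, P s t := by
          refine iSup_le fun π => iSup_le fun hπ => ?_
          refine le_trans (iInf_le _ 0) ?_
          rw [hπ]
          exact le_iSup _ (π 1)
end

section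
/- Let M=(S,P,I,AP,L) be a finite generalized possibilistic Kripke structure. For a finite sequence of states s₀,…,s_n with n > 0, the generalized possibility measure of its cylinder set satisfies Po(Cyl(s₀⋯s_n)) = I(s₀) ∧ inf_{0≤i≤n−1} P(s_i,s_{i+1}) ∧ r_P(s_n), and for n = 0, Po(Cyl(s₀)) = I(s₀) ∧ r_P(s₀). -/
open unitInterval

/-- The cylinder set spanned by the first `n + 1` states of `ω`: all infinite
sequences having `ω 0 ⋯ ω n` as a prefix. -/
def Cyl {S : Type*} (ω : ℕ → S) (n : ℕ) : Set (ℕ → S) :=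
  {π : ℕ → S | ∀ i ≤ n, π i = ω i}

lemma PoSet_cylinder_key {S : Type*} (P : S → S → unitInterval) (Init : S → unitInterval)
    (ω : ℕ → S) (n : ℕ) :
    PoSet P Init (Cyl ω n) =
      Init (ω 0) ⊓ (⨅ i ∈ Finset.range n, P (ω i) (ω (i + 1))) ⊓ rP P (ω n) := by
  apply le_antisymm
  · apply iSup₂_le
    intro π hπ
    have h0 : π 0 = ω 0 := hπ 0 (Nat.zero_le n)
    rw [h0]
    refine le_inf (le_inf inf_le_left ?_) ?_
    · refine inf_le_right.trans (le_iInf₂ fun i hi => ?_)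
      have hi' : i < n := Finset.mem_range.mp hi
      have e1 : π i = ω i := hπ i hi'.le
      have e2 : π (i + 1) = ω (i + 1) := hπ (i + 1) hi'
      calc (⨅ j, P (π j) (π (j + 1))) ≤ P (π i) (π (i + 1)) := iInf_le _ i
        _ = P (ω i) (ω (i + 1)) := by rw [e1, e2]
    · refine inf_le_right.trans ?_
      have hσ0 : (fun i => π (n + i)) 0 = ω n := hπ n le_rfl
      have step : (⨅ j, P (π j) (π (j + 1))) ≤
          ⨅ i, P ((fun i => π (n + i)) i) ((fun i => π (n + i)) (i + 1)) := by
        refine le_iInf fun i => ?_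
        refine le_trans (iInf_le _ (n + i)) ?_
        simp [Nat.add_assoc]
      refine step.trans ?_
      rw [rP]
      exact le_iSup₂_of_le (fun i => π (n + i)) hσ0 le_rfl
  · rw [rP, inf_iSup_eq]
    refine iSup_le fun p => ?_
    rw [inf_iSup_eq]
    refine iSup_le fun hp0 => ?_
    set π : ℕ → S := fun i => if i ≤ n then ω i else p (i - n) with hπdef
    have hmem : π ∈ Cyl ω n := fun i hi => by simp [π, hi]
    refine le_trans ?_ (le_iSup₂_of_le π hmem le_rfl)
    have hπ0 : π 0 = ω 0 := hmem 0 (Nat.zero_le n)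
    rw [hπ0]
    refine le_inf (inf_le_left.trans inf_le_left) (le_iInf fun i => ?_)
    rcases lt_or_ge i n with hlt | hge
    · have e1 : π i = ω i := hmem i hlt.le
      have e2 : π (i + 1) = ω (i + 1) := hmem (i + 1) hlt
      rw [e1, e2]
      exact inf_le_left.trans (inf_le_right.trans (iInf₂_le i (Finset.mem_range.mpr hlt)))
    · have e1 : π i = p (i - n) := by
        rcases eq_or_lt_of_le hge with h | h
        · simp [π, ← h, hp0]
        · simp [π, Nat.not_le.mpr h]
      have e2 : π (i + 1) = p (i - n + 1) := by
        have : ¬ (i + 1 ≤ n) := by omega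
        simp [π, this, Nat.succ_sub hge]
      rw [e1, e2]
      exact inf_le_right.trans (iInf_le _ (i - n))

/-- For a finite GPKS, the generalized possibility measure of a
cylinder set satisfies
`Po(Cyl(s₀⋯s_n)) = I(s₀) ∧ inf_{0 ≤ i ≤ n−1} P(s_i,s_{i+1}) ∧ r_P(s_n)` for `n > 0`,
and `Po(Cyl(s₀)) = I(s₀) ∧ r_P(s₀)` for `n = 0`. -/
theorem PoSet_cylinder {S : Type*} [Fintype S] [Nonempty S]
    {AP : Type*} [Fintype AP]
    (P : S → S → unitInterval) (Init : S → unitInterval) (L : S → AP → unitInterval)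
    (ω : ℕ → S) (n : ℕ) :
    (0 < n →
      PoSet P Init (Cyl ω n) =
        Init (ω 0) ⊓ (⨅ i ∈ Finset.range n, P (ω i) (ω (i + 1))) ⊓ rP P (ω n)) ∧
    (n = 0 → PoSet P Init (Cyl ω n) = Init (ω 0) ⊓ rP P (ω 0)) := by
  refine ⟨fun _ => PoSet_cylinder_key P Init ω n, fun hn => ?_⟩
  subst hn
  rw [PoSet_cylinder_key P Init ω 0]
  simp
end

section
/- Let M=(S,P,I,AP,L) be a finite generalized possibilistic Kripke structure and B : S → [0,1] a fuzzy state. Then for every state s ∈ S, the reachability possibility satisfies Po(s ⊨ ◇B) = (P* ∘ D_B ∘ r_P)(s), i.e. sup_{π ∈ S^ω, π₀ = s} ( inf_{i≥0} P(π_i,π_{i+1}) ∧ sup_{j≥0} B(π_j) ) = sup_{t∈S} ( P*(s,t) ∧ B(t) ∧ r_P(t) ). -/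
open unitInterval

private lemma lemB {S : Type*} (P : S → S → unitInterval) :
    ∀ (k : ℕ) (f : ℕ → S),
      (⨅ i : Fin k, P (f i) (f (i + 1))) ≤ matPow P k (f 0) (f k) := by
  intro k
  induction k with
  | zero =>
    intro f
    simp only [matPow, matId, if_pos rfl]
    exact le_top.trans (le_of_eq rfl)
  | succ k ih =>
    intro f
    refine le_iSup_of_le (f k) (le_inf ?_ ?_)
    · refine le_trans ?_ (ih f)
      exact le_iInf fun i => iInf_le_of_le i.castSucc (by simp)
    · exact iInf_le_of_le (Fin.last k) (by simp)

private lemma lemA {S : Type*} (P : S → S → unitInterval) :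
    ∀ (k : ℕ) (s t : S),
      matPow P k s t ≤
        ⨆ (f : ℕ → S) (_ : f 0 = s) (_ : f k = t), ⨅ i : Fin k, P (f i) (f (i + 1)) := by
  intro k
  induction k with
  | zero =>
    intro s t
    by_cases h : s = t
    · subst h
      refine le_trans le_top ?_
      refine le_iSup_of_le (fun _ => s) (le_iSup_of_le rfl (le_iSup_of_le rfl ?_))
      simp
    · simp only [matPow, matId, if_neg h]
      exact bot_le
  | succ k ih =>
    intro s t
    refine iSup_le fun u => ?_
    refine le_trans (inf_le_inf_right _ (ih s u)) ?_
    simp only [iSup_inf_eq]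
    refine iSup_le fun f => iSup_le fun h0 => iSup_le fun hk => ?_
    classical
    set g : ℕ → S := fun i => if i = k + 1 then t else f i with hg
    have hg0 : g 0 = s := by simp [hg, h0]
    have hgk : g (k + 1) = t := by simp [hg]
    refine le_iSup_of_le g (le_iSup_of_le hg0 (le_iSup_of_le hgk ?_))
    refine le_iInf fun i => ?_
    rcases lt_or_eq_of_le (Nat.lt_succ_iff.mp i.isLt) with hi | hi
    · have e1 : g (i : ℕ) = f (i : ℕ) := by
        simp [hg]; omega
      have e2 : g ((i : ℕ) + 1) = f ((i : ℕ) + 1) := by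
        simp [hg]; omega
      rw [e1, e2]
      exact le_trans inf_le_left (iInf_le _ (⟨(i : ℕ), hi⟩ : Fin k))
    · have e1 : g (i : ℕ) = u := by
        rw [hi]; simpa [hg] using hk
      have e2 : g ((i : ℕ) + 1) = t := by rw [hi]; exact hgk
      rw [e1, e2]
      exact inf_le_right

private lemma keyLem {S : Type*} (P : S → S → unitInterval) (B : S → unitInterval)
    (k : ℕ) (f tau : ℕ → S) (hftau : f k = tau 0) :
    (⨅ i : Fin k, P (f i) (f (i + 1))) ⊓ B (f k) ⊓ (⨅ i, P (tau i) (tau (i + 1))) ≤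
      Po P (fun π => ⨆ j, B (π j)) (f 0) := by
  classical
  set π : ℕ → S := fun i => if i < k then f i else tau (i - k) with hπ
  have hπ0 : π 0 = f 0 := by
    by_cases h : 0 < k
    · simp [hπ, h]
    · have hk0 : k = 0 := by omega
      simp [hπ, hk0, ← hftau]
  have hπk : π k = f k := by simp [hπ, hftau]
  refine le_trans ?_ (le_iSup_of_le π (le_iSup_of_le hπ0 le_rfl))
  refine le_inf ?_ ?_
  · refine le_iInf fun i => ?_
    by_cases hi : i < k
    · have e1 : π i = f i := by simp [hπ, hi]
      have e2 : π (i + 1) = f (i + 1) := by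
        by_cases h2 : i + 1 < k
        · simp [hπ, h2]
        · have : i + 1 = k := by omega
          rw [this] at h2 ⊢
          simp [hπ, hftau]
      rw [e1, e2]
      exact le_trans inf_le_left (le_trans inf_le_left (iInf_le _ (⟨i, hi⟩ : Fin k)))
    · have e1 : π i = tau (i - k) := by simp [hπ, hi]
      have e2 : π (i + 1) = tau (i - k + 1) := by
        have h2 : ¬ (i + 1 < k) := by omega
        have : i + 1 - k = i - k + 1 := by omega
        simp [hπ, h2, this]
      rw [e1, e2]
      exact le_trans inf_le_right (iInf_le _ (i - k))
  · refine le_trans (le_trans inf_le_left inf_le_right) ?_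
    refine le_trans ?_ (le_iSup (fun j => B (π j)) k)
    rw [hπk]

/-- For a finite GPKS and a fuzzy state `B : S → [0,1]`, the
reachability possibility satisfies `Po(s ⊨ ◇B) = (P* ∘ D_B ∘ r_P)(s)`, i.e.
`sup_{π, π₀=s} ( inf_i P(π_i,π_{i+1}) ∧ sup_j B(π_j) ) = sup_t ( P*(s,t) ∧ B(t) ∧ r_P(t) )`. -/
theorem Po_eventually_eq {S : Type*} [Fintype S] [Nonempty S]
    {AP : Type*} [Fintype AP]
    (P : S → S → unitInterval) (Init : S → unitInterval) (L : S → AP → unitInterval)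
    (B : S → unitInterval) (s : S) :
    Po P (fun π => ⨆ j, B (π j)) s =
      ⨆ t : S, reflTransClos P s t ⊓ B t ⊓ rP P t := by
  apply le_antisymm
  · refine iSup_le fun π => iSup_le fun hπ => ?_
    rw [inf_iSup_eq]
    refine iSup_le fun j => ?_
    refine le_iSup_of_le (π j) (le_inf (le_inf ?_ inf_le_right) ?_)
    · refine le_trans inf_le_left ?_
      refine le_trans ?_ (le_iSup (fun k => matPow P k s (π j)) j)
      refine le_trans (le_iInf fun i : Fin j => iInf_le _ (i : ℕ)) ?_
      rw [← hπ]
      exact lemB P j π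
    · refine le_trans inf_le_left ?_
      refine le_iSup_of_le (fun i => π (j + i)) (le_iSup_of_le rfl ?_)
      refine le_iInf fun i => ?_
      show _ ≤ P (π (j + i)) (π (j + (i + 1)))
      have : j + (i + 1) = j + i + 1 := by omega
      rw [this]
      exact iInf_le _ (j + i)
  · refine iSup_le fun t => ?_
    show reflTransClos P s t ⊓ B t ⊓ rP P t ≤ _
    rw [reflTransClos, rP, iSup_inf_eq, iSup_inf_eq]
    refine iSup_le fun k => ?_
    simp only [inf_iSup_eq]
    refine iSup_le fun tau => iSup_le fun htau => ?_
    refine le_trans (inf_le_inf_right _ (inf_le_inf_right _ (lemA P k s t))) ?_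
    simp only [iSup_inf_eq]
    refine iSup_le fun f => iSup_le fun h0 => iSup_le fun hk => ?_
    have h1 : f k = tau 0 := hk.trans htau.symm
    have := keyLem P B k f tau h1
    rw [h0, hk] at this
    exact this
end

section
/- Let M=(S,P,I,AP,L) be a finite generalized possibilistic Kripke structure and B : S → [0,1] a fuzzy state. Then the vector Po(□B) = (Po(s ⊨ □B))_{s∈S} is the greatest fixed point of the monotone operator f_B on [0,1]^S defined by f_B(Z) = B ∧ (P ∘ D_Z ∘ r_P), i.e. f_B(Z)(s) = B(s) ∧ sup_{t∈S} ( P(s,t) ∧ Z(t) ∧ r_P(t) ). -/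
open unitInterval

section Aux

variable {S : Type*}

private lemma X_le_rP (P : S → S → unitInterval) (B : S → unitInterval) (t : S) :
    Po P (fun π => ⨅ j, B (π j)) t ≤ rP P t := by
  refine iSup₂_le fun π hπ => ?_
  exact le_trans inf_le_left (le_iSup₂ (f := fun π (_ : π 0 = t) => ⨅ i, P (π i) (π (i+1))) π hπ)

end Aux

/-- For a finite GPKS and a fuzzy state `B`, the vector
`Po(□B) = (Po(s ⊨ □B))_{s∈S}` is the greatest fixed point of the monotone operator
`f_B(Z)(s) = B(s) ∧ sup_{t∈S} ( P(s,t) ∧ Z(t) ∧ r_P(t) )` on `[0,1]^S`. -/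
theorem Po_always_greatest_fixed_point {S : Type*} [Fintype S] [Nonempty S]
    {AP : Type*} [Fintype AP]
    (P : S → S → unitInterval) (Init : S → unitInterval) (L : S → AP → unitInterval)
    (B : S → unitInterval)
    (fB : (S → unitInterval) → S → unitInterval)
    (hfB : ∀ Z s, fB Z s = B s ⊓ ⨆ t : S, P s t ⊓ Z t ⊓ rP P t)
    (v : S → unitInterval)
    (hv : ∀ s, v s = Po P (fun π => ⨅ j, B (π j)) s) :
    fB v = v ∧ ∀ Z : S → unitInterval, fB Z = Z → Z ≤ v := by
  -- abbreviation for the value of a path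
  set X : (ℕ → S) → unitInterval :=
    fun π => (⨅ i, P (π i) (π (i + 1))) ⊓ ⨅ j, B (π j) with hX
  have hv' : ∀ s, v s = ⨆ (π : ℕ → S) (_ : π 0 = s), X π := by
    intro s; rw [hv s]; rfl
  have hXv : ∀ (π : ℕ → S), X π ≤ v (π 0) := by
    intro π
    rw [hv' (π 0)]
    exact le_iSup₂ (f := fun π' (_ : π' 0 = π 0) => X π') π rfl
  have hvrP : ∀ t, v t ≤ rP P t := by
    intro t; rw [hv t]; exact X_le_rP P B t
  constructor
  · -- fixed point
    funext s
    rw [hfB]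
    -- simplify the rP factor away
    have hterm : ∀ t, P s t ⊓ v t ⊓ rP P t = P s t ⊓ v t := by
      intro t
      exact inf_eq_left.mpr (le_trans inf_le_right (hvrP t))
    simp only [hterm]
    apply le_antisymm
    · -- fB v s ≤ v s
      rw [inf_iSup_eq]
      refine iSup_le fun t => ?_
      have key : ∀ ρ : ℕ → S, ρ 0 = t → B s ⊓ (P s t ⊓ X ρ) ≤ v s := by
        intro ρ hρ0
        -- build the path s :: ρ
        set π : ℕ → S := fun n => Nat.rec s (fun n _ => ρ n) n with hπ
        have hπ0 : π 0 = s := rfl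
        have hπs : ∀ n, π (n + 1) = ρ n := fun n => rfl
        have h1 : B s ⊓ (P s t ⊓ X ρ) ≤ X π := by
          refine le_inf (le_iInf fun i => ?_) (le_iInf fun j => ?_)
          · cases i with
            | zero =>
              have h0 : P (π 0) (π (0 + 1)) = P s t := by rw [hπ0, hπs, hρ0]
              rw [h0]
              exact inf_le_of_right_le inf_le_left
            | succ n =>
              simp only [hπs]
              exact le_trans (inf_le_of_right_le (inf_le_of_right_le inf_le_left))
                (iInf_le _ n)
          · cases j with
            | zero => exact inf_le_left
            | succ n =>
              simp only [hπs]
              exact le_trans (inf_le_of_right_le (inf_le_of_right_le inf_le_right))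
                (iInf_le _ n)
        exact le_trans h1 (by simpa [hπ0] using hXv π)
      have hdist : B s ⊓ (P s t ⊓ v t)
          = ⨆ (ρ : ℕ → S) (_ : ρ 0 = t), B s ⊓ (P s t ⊓ X ρ) := by
        rw [hv' t]
        simp only [inf_iSup_eq]
      rw [hdist]
      exact iSup₂_le key
    · -- v s ≤ fB v s
      rw [hv' s]
      refine iSup_le fun π => iSup_le fun hπ0 => ?_
      refine le_inf ?_ ?_
      · exact le_trans inf_le_right (le_trans (iInf_le _ 0) (le_of_eq (by rw [hπ0])))
      · -- X π ≤ ⨆ t, P s t ⊓ v t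
        set ρ : ℕ → S := fun n => π (n + 1) with hρdef
        have hXρ : X π ≤ X ρ := by
          refine le_inf (le_trans inf_le_left (le_iInf fun i => iInf_le _ (i+1)))
            (le_trans inf_le_right (le_iInf fun j => iInf_le _ (j+1)))
        have h2 : X π ≤ P s (ρ 0) ⊓ v (ρ 0) := by
          refine le_inf ?_ (le_trans hXρ (hXv ρ))
          exact le_trans inf_le_left (le_trans (iInf_le _ 0) (le_of_eq (by rw [hπ0])))
        exact le_trans h2 (le_iSup (fun t => P s t ⊓ v t) (ρ 0))
  · -- greatest
    intro Z hZ
    have hZs : ∀ s, Z s = B s ⊓ ⨆ t : S, P s t ⊓ Z t ⊓ rP P t := by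
      intro s; conv_lhs => rw [← hZ]
      exact hfB Z s
    -- choose a maximizing successor
    have hsucc : ∀ s : S, ∃ t : S, Z s ≤ B s ⊓ (P s t ⊓ Z t) := by
      intro s
      obtain ⟨t, ht⟩ := Finite.exists_max (fun t => P s t ⊓ Z t ⊓ rP P t)
      refine ⟨t, ?_⟩
      rw [hZs s]
      refine le_inf inf_le_left (le_trans inf_le_right (le_trans (iSup_le ht) ?_))
      exact le_inf (le_trans inf_le_left inf_le_left) (le_trans inf_le_left inf_le_right)
    choose h hh using hsucc
    intro s
    set π : ℕ → S := fun n => h^[n] s with hπdef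
    have hπ0 : π 0 = s := rfl
    have hπs : ∀ n, π (n + 1) = h (π n) := by
      intro n; simp [hπdef, Function.iterate_succ_apply']
    have hmono : ∀ n, Z s ≤ Z (π n) := by
      intro n
      induction n with
      | zero => exact le_refl _
      | succ n ih =>
        rw [hπs n]
        exact le_trans ih (le_trans (hh (π n)) (le_trans inf_le_right inf_le_right))
    have hZX : Z s ≤ X π := by
      refine le_inf (le_iInf fun i => ?_) (le_iInf fun j => ?_)
      · rw [hπs i]
        exact le_trans (hmono i) (le_trans (hh (π i)) (le_trans inf_le_right inf_le_left))
      · exact le_trans (hmono j) (le_trans (hh (π j)) inf_le_left)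
    exact le_trans hZX (by simpa [hπ0] using hXv π)
end

section
/- Let M=(S,P,I,AP,L) be a finite generalized possibilistic Kripke structure and B, C : S → [0,1] fuzzy states. Then for every n ≥ 0 and every state s ∈ S, the bounded constrained reachability possibility satisfies Po(s ⊨ C U^{≤n} B) = ( sup_{0≤i≤n} (D_C ∘ P)^i ∘ D_B ∘ r_P )(s), where (C U^{≤n} B)(π) = sup_{0≤j≤n} ( B(π_j) ∧ inf_{0≤i<j} C(π_i) ). -/
open unitInterval

section Aux

variable {S : Type*}

private lemma comp_diag_right (K : S → S → unitInterval) (B : S → unitInterval) (s t : S) :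
    matComp K (diagMat B) s t = K s t ⊓ B t := by
  unfold matComp diagMat
  apply le_antisymm
  · refine iSup_le fun u => ?_
    by_cases h : u = t
    · subst h; simp
    · simp only [if_neg h]
      exact inf_le_right.trans (le_inf nonneg' nonneg')
  · exact le_iSup_of_le t (by simp)

private lemma diag_left (C : S → unitInterval) (P : S → S → unitInterval) (v u : S) :
    matComp (diagMat C) P v u = C v ⊓ P v u := by
  unfold matComp diagMat
  apply le_antisymm
  · refine iSup_le fun w => ?_
    by_cases h : v = w
    · subst h; simp
    · simp only [if_neg h]
      exact inf_le_left.trans (le_inf nonneg' nonneg')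
  · exact le_iSup_of_le v (by simp)

private lemma pow_path (C : S → unitInterval) (P : S → S → unitInterval) :
    ∀ (j : ℕ) (s u : S), matPow (matComp (diagMat C) P) j s u =
      ⨆ (f : ℕ → S) (_ : f 0 = s) (_ : f j = u),
        ⨅ k ∈ Finset.range j, C (f k) ⊓ P (f k) (f (k + 1)) := by
  intro j
  induction j with
  | zero =>
    intro s u
    simp only [matPow, matId]
    by_cases h : s = u
    · subst h
      rw [if_pos rfl]
      apply le_antisymm
      · refine le_iSup_of_le (fun _ => s) (le_iSup_of_le rfl (le_iSup_of_le rfl ?_))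
        simp
      · exact iSup_le fun f => iSup_le fun _ => iSup_le fun _ => le_one'
    · rw [if_neg h]
      apply le_antisymm
      · exact nonneg'
      · exact iSup_le fun f => iSup_le fun h1 => iSup_le fun h2 =>
          absurd (h1.symm.trans h2) h
  | succ j ih =>
    intro s u
    have expand : matPow (matComp (diagMat C) P) (j + 1) s u =
        ⨆ v, matPow (matComp (diagMat C) P) j s v ⊓ (C v ⊓ P v u) := by
      show (⨆ v, matPow (matComp (diagMat C) P) j s v ⊓ matComp (diagMat C) P v u) = _
      exact iSup_congr fun v => by rw [diag_left]
    rw [expand]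
    apply le_antisymm
    · refine iSup_le fun v => ?_
      rw [ih, iSup_inf_eq]
      refine iSup_le fun f => ?_
      rw [iSup_inf_eq]
      refine iSup_le fun hf0 => ?_
      rw [iSup_inf_eq]
      refine iSup_le fun hfj => ?_
      set g : ℕ → S := fun k => if k = j + 1 then u else f k with hg
      have hgk : ∀ k, k ≤ j → g k = f k := fun k hk => if_neg (by omega)
      have hgj1 : g (j + 1) = u := if_pos rfl
      refine le_iSup_of_le g (le_iSup_of_le (by rw [hgk 0 (by omega), hf0])
        (le_iSup_of_le hgj1 ?_))
      refine le_iInf₂ fun k hk => ?_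
      have hk' : k < j + 1 := Finset.mem_range.mp hk
      by_cases hkj : k = j
      · subst hkj
        rw [hgk k le_rfl, hgj1, hfj]
        exact inf_le_right
      · have hklt : k < j := by omega
        rw [hgk k (by omega), hgk (k + 1) (by omega)]
        exact inf_le_left.trans (iInf₂_le k (Finset.mem_range.mpr hklt))
    · refine iSup_le fun g => iSup_le fun hg0 => iSup_le fun hgj => ?_
      refine le_iSup_of_le (g j) (le_inf ?_ (le_inf ?_ ?_))
      · rw [ih]
        refine le_iSup_of_le g (le_iSup_of_le hg0 (le_iSup_of_le rfl ?_))
        refine le_iInf₂ fun k hk => ?_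
        exact iInf₂_le k (Finset.mem_range.mpr (by
          have := Finset.mem_range.mp hk; omega))
      · exact (iInf₂_le j (Finset.mem_range.mpr (by omega))).trans inf_le_left
      · refine (iInf₂_le j (Finset.mem_range.mpr (by omega))).trans
          (inf_le_right.trans (le_of_eq ?_))
        rw [hgj]

end Aux

/-- For a finite GPKS and fuzzy states `B, C : S → [0,1]`, for every
`n ≥ 0` and state `s`, the bounded constrained reachability possibility satisfies
`Po(s ⊨ C U^{≤n} B) = ( sup_{0≤i≤n} (D_C ∘ P)^i ∘ D_B ∘ r_P )(s)`, where
`(C U^{≤n} B)(π) = sup_{0≤j≤n} ( B(π_j) ∧ inf_{0≤i<j} C(π_i) )`. -/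
theorem Po_bounded_until_eq {S : Type*} [Fintype S] [Nonempty S]
    {AP : Type*} [Fintype AP]
    (P : S → S → unitInterval) (Init : S → unitInterval) (L : S → AP → unitInterval)
    (B C : S → unitInterval) (n : ℕ) (s : S) :
    Po P (fun π => ⨆ j ∈ Finset.range (n + 1),
        B (π j) ⊓ ⨅ i ∈ Finset.range j, C (π i)) s =
      matVec (matComp (fun u v => ⨆ i ∈ Finset.range (n + 1),
        matPow (matComp (diagMat C) P) i u v) (diagMat B)) (rP P) s := by
  classical
  have hRHS : matVec (matComp (fun u v => ⨆ i ∈ Finset.range (n + 1),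
        matPow (matComp (diagMat C) P) i u v) (diagMat B)) (rP P) s =
      ⨆ (t : S) (j : ℕ) (_ : j ∈ Finset.range (n + 1)),
        (matPow (matComp (diagMat C) P) j s t ⊓ B t) ⊓ rP P t := by
    show (⨆ t, matComp (fun u v => ⨆ i ∈ Finset.range (n + 1),
        matPow (matComp (diagMat C) P) i u v) (diagMat B) s t ⊓ rP P t) = _
    refine iSup_congr fun t => ?_
    rw [comp_diag_right]
    simp only [iSup_inf_eq]
  rw [hRHS]
  apply le_antisymm
  · -- Po ≤ matrix expression
    refine iSup_le fun π => iSup_le fun hπ0 => ?_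
    simp only [inf_iSup_eq]
    refine iSup_le fun j => iSup_le fun hj => ?_
    refine le_iSup_of_le (π j) (le_iSup_of_le j (le_iSup_of_le hj
      (le_inf (le_inf ?_ ?_) ?_)))
    · -- ≤ matPow
      rw [pow_path]
      refine le_iSup_of_le π (le_iSup_of_le hπ0 (le_iSup_of_le rfl ?_))
      refine le_iInf₂ fun k hk => le_inf ?_ ?_
      · exact inf_le_right.trans (inf_le_right.trans (iInf₂_le k hk))
      · exact inf_le_left.trans (iInf_le _ k)
    · -- ≤ B (π j)
      exact inf_le_right.trans inf_le_left
    · -- ≤ rP P (π j)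
      refine le_iSup_of_le (fun i => π (j + i)) (le_iSup_of_le rfl ?_)
      exact le_iInf fun i => inf_le_left.trans (iInf_le _ (j + i))
  · -- matrix expression ≤ Po
    refine iSup_le fun t => iSup_le fun j => iSup_le fun hj => ?_
    rw [pow_path]
    simp only [rP, iSup_inf_eq, inf_iSup_eq]
    refine iSup_le fun sg => iSup_le fun hsg0 => iSup_le fun f =>
      iSup_le fun hf0 => iSup_le fun hfj => ?_
    set π : ℕ → S := fun k => if k < j then f k else sg (k - j) with hπdef
    have hlt : ∀ k, k < j → π k = f k := fun k hk => if_pos hk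
    have hge : ∀ k, j ≤ k → π k = sg (k - j) := fun k hk => if_neg (by omega)
    have hπj : π j = t := by rw [hge j le_rfl, Nat.sub_self, hsg0]
    have hπ0 : π 0 = s := by
      rcases Nat.eq_zero_or_pos j with h0 | h0
      · subst h0
        rw [hge 0 le_rfl, Nat.sub_self, hsg0, ← hfj, hf0]
      · rw [hlt 0 h0, hf0]
    have hπsucc : ∀ i, i + 1 ≤ j → π (i + 1) = f (i + 1) := by
      intro i hi
      rcases lt_or_eq_of_le hi with h | h
      · exact hlt _ h
      · rw [hge (i + 1) (by omega), h, Nat.sub_self, hsg0, ← hfj]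
    refine le_iSup_of_le π (le_iSup_of_le hπ0 (le_inf ?_ ?_))
    · -- ≤ ⨅ i, P (π i) (π (i+1))
      refine le_iInf fun i => ?_
      rcases Nat.lt_or_ge i j with hi | hi
      · rw [hlt i hi, hπsucc i (by omega)]
        exact inf_le_left.trans (inf_le_left.trans
          ((iInf₂_le i (Finset.mem_range.mpr hi)).trans inf_le_right))
      · rw [hge i hi, hge (i + 1) (by omega)]
        have : i + 1 - j = (i - j) + 1 := by omega
        rw [this]
        exact inf_le_right.trans (iInf_le _ (i - j))
    · -- ≤ path formula
      refine le_iSup_of_le j (le_iSup_of_le hj (le_inf ?_ ?_))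
      · rw [hπj]
        exact inf_le_left.trans inf_le_right
      · refine le_iInf₂ fun k hk => ?_
        rw [hlt k (Finset.mem_range.mp hk)]
        exact inf_le_left.trans (inf_le_left.trans
          ((iInf₂_le k hk).trans inf_le_left))
end

section
/- Let M=(S,P,I,AP,L) be a finite generalized possibilistic Kripke structure with |S| = N and let B, C : S → [0,1] be fuzzy states. Then for every n ≥ N, sup_{0≤i≤n} (D_C ∘ P)^i = (D_C ∘ P)*, and consequently Po(s ⊨ C U^{≤n} B) = ( (D_C ∘ P)* ∘ D_B ∘ r_P )(s) for every state s ∈ S. -/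
open unitInterval

-- path value along finite prefix
noncomputable def pv {S : Type*} (A : S → S → unitInterval) (k : ℕ) (f : ℕ → S) : unitInterval :=
  ⨅ i ∈ Finset.range k, A (f i) (f (i + 1))

lemma pow_eq_path {S : Type*} (A : S → S → unitInterval) (k : ℕ) (s t : S) :
    matPow A k s t = ⨆ (f : ℕ → S) (_ : f 0 = s) (_ : f k = t), pv A k f := by
  induction k generalizing t with
  | zero =>
    simp only [matPow, matId, pv]
    by_cases h : s = t
    · subst h
      apply le_antisymm
      · rw [if_pos rfl]
        have : (1 : unitInterval) ≤ ⨅ i ∈ Finset.range 0, A ((fun _ => s) i) ((fun _ => s) (i+1)) := by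
          simp
        exact le_trans this
          (le_iSup_of_le (fun _ => s) (le_iSup_of_le rfl (le_iSup_of_le rfl le_rfl)))
      · exact le_trans le_top (le_of_eq (if_pos rfl).symm)
    · rw [if_neg h]
      apply le_antisymm
      · exact bot_le
      · refine iSup_le fun f => iSup_le fun h0 => iSup_le fun hk => ?_
        exact absurd (h0 ▸ hk) h
  | succ k ih =>
    show matComp (matPow A k) A s t = _
    unfold matComp
    apply le_antisymm
    · refine iSup_le fun u => ?_
      rw [ih u, iSup_inf_eq]
      refine iSup_le fun f => ?_
      rw [iSup_inf_eq]
      refine iSup_le fun h0 => ?_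
      rw [iSup_inf_eq]
      refine iSup_le fun hk => ?_
      classical
      set g : ℕ → S := fun i => if i ≤ k then f i else t with hg
      have hg0 : g 0 = s := by simp [hg, Nat.zero_le, h0]
      have hgk : g (k + 1) = t := by simp [hg]
      refine le_trans ?_ (le_iSup_of_le g (le_iSup_of_le hg0 (le_iSup_of_le hgk le_rfl)))
      unfold pv
      rw [Finset.range_add_one]
      rw [Finset.iInf_insert]
      refine le_inf ?_ ?_
      · have h1 : g k = u := by simp [hg, hk]
        have h2 : g (k + 1) = t := hgk
        rw [h1, h2]
        exact inf_le_right
      · refine le_iInf₂ fun i hi => ?_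
        simp only [Finset.mem_range] at hi
        have e1 : g i = f i := by simp [hg, le_of_lt hi]
        have e2 : g (i + 1) = f (i + 1) := by simp [hg, Nat.succ_le_of_lt hi]
        rw [e1, e2]
        exact le_trans inf_le_left (iInf₂_le i (Finset.mem_range.2 hi))
    · refine iSup_le fun g => iSup_le fun h0 => iSup_le fun hk1 => ?_
      refine le_trans ?_ (le_iSup _ (g k))
      refine le_inf ?_ ?_
      · rw [ih (g k)]
        refine le_trans ?_ (le_iSup_of_le g (le_iSup_of_le h0 (le_iSup_of_le rfl le_rfl)))
        unfold pv
        exact le_iInf₂ fun i hi => iInf₂_le i (Finset.mem_range.2 (Nat.lt_succ_of_lt (Finset.mem_range.1 hi)))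
      · rw [← hk1]
        exact iInf₂_le k (Finset.mem_range.2 (Nat.lt_succ_self k))

lemma pow_le_sup {S : Type*} [Fintype S] (A : S → S → unitInterval) (n : ℕ)
    (hn : Fintype.card S ≤ n) : ∀ k, ∀ u v : S,
    matPow A k u v ≤ ⨆ i ∈ Finset.range (n + 1), matPow A i u v := by
  intro k
  induction k using Nat.strong_induction_on with
  | _ k ih =>
  intro u v
  by_cases hk : k ≤ n
  · exact le_iSup₂ (f := fun i (_ : i ∈ Finset.range (n+1)) => matPow A i u v) k
      (Finset.mem_range.2 (Nat.lt_succ_of_le hk))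
  · push_neg at hk
    rw [pow_eq_path]
    refine iSup_le fun f => iSup_le fun h0 => iSup_le fun hkv => ?_
    have hcard : (Finset.univ : Finset S).card < (Finset.range (k + 1)).card := by
      simp only [Finset.card_range, Finset.card_univ]
      omega
    obtain ⟨a, ha, b, hb, hab, hfab⟩ :=
      Finset.exists_ne_map_eq_of_card_lt_of_maps_to hcard
        (fun x _ => Finset.mem_univ (f x))
    simp only [Finset.mem_range] at ha hb
    -- wlog a < b
    obtain ⟨a, b, hab, hbk, hfab⟩ : ∃ a b : ℕ, a < b ∧ b ≤ k ∧ f a = f b := by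
      rcases lt_or_gt_of_ne hab with h | h
      · exact ⟨a, b, h, by omega, hfab⟩
      · exact ⟨b, a, h, by omega, hfab.symm⟩
    classical
    set d := b - a with hd
    set k' := k - d with hk'
    have hd1 : 1 ≤ d := by omega
    have hak' : a ≤ k' := by omega
    have hkk : k' < k := by omega
    set g : ℕ → S := fun i => if i < a then f i else f (i + d) with hg
    have hg0 : g 0 = u := by
      by_cases h : 0 < a
      · simpa [hg, h] using h0
      · have ha0 : a = 0 := by omega
        have e : g 0 = f b := by
          simp only [hg, if_neg h]
          congr 1
          omega
        rw [e, ← hfab, ha0, h0]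
    have hgk : g k' = v := by
      have : ¬ k' < a := not_lt.2 hak'
      have e : k' + d = k := by omega
      simp [hg, this, e, hkv]
    have key : ∀ i, i < k' → ∃ j, j < k ∧ g i = f j ∧ g (i + 1) = f (j + 1) := by
      intro i hi
      by_cases hia : i < a
      · refine ⟨i, by omega, by simp [hg, hia], ?_⟩
        by_cases hia1 : i + 1 < a
        · simp [hg, hia1]
        · have : i + 1 = a := by omega
          have e : i + 1 + d = b := by omega
          simp only [hg, if_neg hia1, e]
          rw [← hfab, this]
      · refine ⟨i + d, by omega, by simp [hg, hia], ?_⟩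
        have : ¬ i + 1 < a := by omega
        simp only [hg, if_neg this]
        congr 1
        omega
    have hpv : pv A k f ≤ pv A k' g := by
      refine le_iInf₂ fun i hi => ?_
      obtain ⟨j, hj, e1, e2⟩ := key i (Finset.mem_range.1 hi)
      rw [e1, e2]
      exact iInf₂_le j (Finset.mem_range.2 hj)
    refine le_trans hpv (le_trans ?_ (ih k' hkk u v))
    rw [pow_eq_path]
    exact le_iSup_of_le g (le_iSup_of_le hg0 (le_iSup_of_le hgk le_rfl))

lemma diag_comp {S : Type*} (C : S → unitInterval) (P : S → S → unitInterval) (u v : S) :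
    matComp (diagMat C) P u v = C u ⊓ P u v := by
  unfold matComp diagMat
  apply le_antisymm
  · refine iSup_le fun w => ?_
    by_cases h : u = w
    · subst h; simp
    · rw [if_neg h]
      exact le_trans inf_le_left bot_le
  · exact le_iSup_of_le u (by simp)

lemma comp_diag {S : Type*} (M : S → S → unitInterval) (B : S → unitInterval) (s t : S) :
    matComp M (diagMat B) s t = M s t ⊓ B t := by
  unfold matComp diagMat
  apply le_antisymm
  · refine iSup_le fun w => ?_
    by_cases h : w = t
    · subst h; exact inf_le_inf_left _ (by simp)
    · rw [if_neg h]
      exact le_trans inf_le_right bot_le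
  · exact le_iSup_of_le t (by simp [inf_le_inf_left])


/-- For a finite GPKS with `|S| = N` and fuzzy states `B, C`, for every
`n ≥ N` one has `sup_{0≤i≤n} (D_C ∘ P)^i = (D_C ∘ P)*`, and consequently
`Po(s ⊨ C U^{≤n} B) = ( (D_C ∘ P)* ∘ D_B ∘ r_P )(s)` for every state `s`. -/
theorem bounded_until_stabilizes {S : Type*} [Fintype S] [Nonempty S]
    {AP : Type*} [Fintype AP]
    (P : S → S → unitInterval) (Init : S → unitInterval) (L : S → AP → unitInterval)
    (B C : S → unitInterval) (n : ℕ) (hn : Fintype.card S ≤ n) :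
    (∀ u v : S, (⨆ i ∈ Finset.range (n + 1), matPow (matComp (diagMat C) P) i u v) =
        reflTransClos (matComp (diagMat C) P) u v) ∧
    (∀ s : S,
      Po P (fun π => ⨆ j ∈ Finset.range (n + 1),
          B (π j) ⊓ ⨅ i ∈ Finset.range j, C (π i)) s =
        matVec (matComp (reflTransClos (matComp (diagMat C) P)) (diagMat B)) (rP P) s) := by
  classical
  set A := matComp (diagMat C) P with hA
  have part1 : ∀ u v : S, (⨆ i ∈ Finset.range (n + 1), matPow A i u v) =
      reflTransClos A u v := by
    intro u v
    apply le_antisymm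
    · exact iSup₂_le fun i _ => le_iSup (fun k => matPow A k u v) i
    · exact iSup_le fun k => pow_le_sup A n hn k u v
  refine ⟨part1, fun s => ?_⟩
  apply le_antisymm
  · -- Po ≤ matVec
    refine iSup_le fun π => iSup_le fun hπ => ?_
    simp only [inf_iSup_eq]
    refine iSup_le fun j => iSup_le fun hj => ?_
    simp only [Finset.mem_range] at hj
    -- goal: (⨅ i, P (π i) (π (i+1))) ⊓ (B (π j) ⊓ ⨅ i ∈ range j, C (π i)) ≤ matVec ... s
    refine le_trans ?_ (le_iSup _ (π j))
    rw [comp_diag]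
    have h1 : (⨅ i, P (π i) (π (i + 1))) ⊓ (B (π j) ⊓ ⨅ i ∈ Finset.range j, C (π i)) ≤
        matPow A j s (π j) := by
      rw [pow_eq_path]
      refine le_trans ?_ (le_iSup_of_le π (le_iSup_of_le hπ (le_iSup_of_le rfl le_rfl)))
      refine le_iInf₂ fun i hi => ?_
      rw [hA, diag_comp]
      refine le_inf ?_ ?_
      · exact le_trans inf_le_right (le_trans inf_le_right (iInf₂_le i hi))
      · exact le_trans inf_le_left (iInf_le _ i)
    have h2 : (⨅ i, P (π i) (π (i + 1))) ≤ rP P (π j) := by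
      unfold rP
      refine le_trans ?_ (le_iSup_of_le (fun i => π (j + i)) (le_iSup_of_le rfl le_rfl))
      refine le_iInf fun i => ?_
      exact iInf_le (fun m => P (π m) (π (m + 1))) (j + i)
    refine le_inf (le_inf ?_ (le_trans inf_le_right inf_le_left)) (le_trans inf_le_left h2)
    exact le_trans h1 (le_trans (le_iSup (fun k => matPow A k s (π j)) j) le_rfl)
  · -- matVec ≤ Po
    refine iSup_le fun t => ?_
    rw [comp_diag, ← part1 s t]
    simp only [pow_eq_path, rP, iSup_inf_eq, inf_iSup_eq]
    refine iSup_le fun ρ => iSup_le fun hρ0 => iSup_le fun m => iSup_le fun hm =>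
      iSup_le fun g => iSup_le fun hg0 => iSup_le fun hgm => ?_
    simp only [Finset.mem_range] at hm
    set π : ℕ → S := fun i => if i < m then g i else ρ (i - m) with hπ
    have hπ0 : π 0 = s := by
      by_cases h : 0 < m
      · simpa [hπ, h] using hg0
      · have hm0 : m = 0 := by omega
        have : π 0 = ρ 0 := by simp [hπ, hm0]
        rw [this, hρ0, ← hgm, hm0, hg0]
    have hedge : ∀ i ∈ Finset.range m, pv A m g ≤ C (g i) ⊓ P (g i) (g (i + 1)) := by
      intro i hi
      refine le_trans (iInf₂_le i hi) ?_
      rw [hA, diag_comp]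
    refine le_trans ?_ (le_iSup_of_le π (le_iSup_of_le hπ0 le_rfl))
    refine le_inf ?_ ?_
    · -- ≤ ⨅ i, P (π i) (π (i+1))
      refine le_iInf fun i => ?_
      by_cases hi : i < m
      · have e1 : π i = g i := by simp [hπ, hi]
        have e2 : π (i + 1) = g (i + 1) := by
          by_cases h2 : i + 1 < m
          · simp [hπ, h2]
          · have hm' : i + 1 = m := by omega
            have e : π (i + 1) = ρ 0 := by simp [hπ, h2, hm']
            rw [e, hρ0, ← hgm, hm']
        rw [e1, e2]
        exact le_trans inf_le_left (le_trans inf_le_left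
          (le_trans (hedge i (Finset.mem_range.2 hi)) inf_le_right))
      · have e1 : π i = ρ (i - m) := by simp [hπ, hi]
        have e2 : π (i + 1) = ρ (i - m + 1) := by
          have h2 : ¬ i + 1 < m := by omega
          simp only [hπ, if_neg h2]
          congr 1
          omega
        rw [e1, e2]
        exact le_trans inf_le_right (iInf_le _ (i - m))
    · -- ≤ ⨆ j ∈ range (n+1), B (π j) ⊓ ⨅ i ∈ range j, C (π i)
      refine le_trans ?_ (le_iSup₂ (f := fun j (_ : j ∈ Finset.range (n + 1)) =>
        B (π j) ⊓ ⨅ i ∈ Finset.range j, C (π i)) m (Finset.mem_range.2 hm))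
      refine le_inf ?_ ?_
      · have : π m = t := by
          simp only [hπ, lt_irrefl, if_neg (lt_irrefl m), Nat.sub_self]
          exact hρ0
        rw [this]
        exact le_trans inf_le_left inf_le_right
      · refine le_iInf₂ fun i hi => ?_
        have e1 : π i = g i := by simp [hπ, Finset.mem_range.1 hi]
        rw [e1]
        exact le_trans inf_le_left (le_trans inf_le_left (le_trans (hedge i hi) inf_le_left))
end

section
/- Let M=(S,P,I,AP,L) be a finite generalized possibilistic Kripke structure and B, C : S → [0,1] fuzzy states. Then for every state s ∈ S, the unbounded constrained reachability possibility satisfies Po(s ⊨ C U B) = ( (D_C ∘ P)* ∘ D_B ∘ r_P )(s), where (C U B)(π) = sup_{j≥0} ( B(π_j) ∧ inf_{0≤i<j} C(π_i) ). -/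
open unitInterval

section MyAux
variable {S : Type*}

lemma my_zero_inf (x : unitInterval) : (0:unitInterval) ⊓ x = 0 :=
  inf_eq_left.mpr unitInterval.nonneg'

lemma my_one_inf (x : unitInterval) : (1:unitInterval) ⊓ x = x :=
  inf_eq_right.mpr unitInterval.le_one'

lemma matComp_id_left (A : S → S → unitInterval) : matComp matId A = A := by
  funext s t
  refine le_antisymm (iSup_le fun u => ?_) ?_
  · unfold matId
    by_cases h : s = u
    · subst h; simp [my_one_inf]
    · simp [h, my_zero_inf, unitInterval.nonneg']
  · refine le_trans ?_ (le_iSup _ s)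
    simp [matId, my_one_inf]

lemma matComp_id_right (A : S → S → unitInterval) : matComp A matId = A := by
  funext s t
  refine le_antisymm (iSup_le fun u => ?_) ?_
  · unfold matId
    by_cases h : u = t
    · subst h; simp
    · simp [h, unitInterval.nonneg']
  · refine le_trans ?_ (le_iSup _ t)
    simp only [matId, if_pos rfl]
    exact le_inf le_rfl unitInterval.le_one'

lemma matComp_assoc (A B C : S → S → unitInterval) :
    matComp (matComp A B) C = matComp A (matComp B C) := by
  funext s t
  simp only [matComp, iSup_inf_eq, inf_iSup_eq]
  rw [iSup_comm]
  simp [inf_assoc]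

lemma matPow_succ_left (A : S → S → unitInterval) (n : ℕ) :
    matPow A (n + 1) = matComp A (matPow A n) := by
  induction n with
  | zero => show matComp matId A = matComp A matId
            rw [matComp_id_left, matComp_id_right]
  | succ n ih =>
      show matComp (matPow A (n+1)) A = matComp A (matPow A (n+1))
      conv_lhs => rw [ih]
      rw [matComp_assoc]
      rfl

lemma iInf_nat_split (g : ℕ → unitInterval) : (⨅ i, g i) = g 0 ⊓ ⨅ i, g (i + 1) := by
  refine le_antisymm (le_inf (iInf_le _ 0) (le_iInf fun i => iInf_le _ (i+1))) ?_
  refine le_iInf fun i => ?_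
  cases i with
  | zero => exact inf_le_left
  | succ m => exact inf_le_right.trans (iInf_le _ m)

lemma binf_range_succ (g : ℕ → unitInterval) (n : ℕ) :
    (⨅ i ∈ Finset.range (n+1), g i) = g 0 ⊓ ⨅ i ∈ Finset.range n, g (i+1) := by
  refine le_antisymm (le_inf (iInf₂_le 0 (by simp)) (le_iInf₂ fun i hi =>
    iInf₂_le (i+1) (by simp at hi ⊢; omega))) ?_
  refine le_iInf₂ fun i hi => ?_
  cases i with
  | zero => exact inf_le_left
  | succ m => exact inf_le_right.trans (iInf₂_le m (by simp at hi ⊢; omega))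

/-- the until path property -/
noncomputable def untilProp (B C : S → unitInterval) : (ℕ → S) → unitInterval :=
  fun π => ⨆ j : ℕ, B (π j) ⊓ ⨅ i ∈ Finset.range j, C (π i)

variable (P B C : S → unitInterval → unitInterval)

lemma comp_diag_s8 (P : S → S → unitInterval) (C : S → unitInterval) (u t : S) :
    matComp (diagMat C) P u t = C u ⊓ P u t := by
  refine le_antisymm (iSup_le fun v => ?_) ?_
  · by_cases h : u = v
    · subst h; simp [diagMat]
    · simp only [diagMat, if_neg h, my_zero_inf]
      exact unitInterval.nonneg'
  · refine le_trans ?_ (le_iSup _ u)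
    simp [diagMat]

lemma Po_def (P : S → S → unitInterval) (Φ : (ℕ → S) → unitInterval) (s : S) :
    Po P Φ s = ⨆ (π : ℕ → S) (_ : π 0 = s), (⨅ i, P (π i) (π (i + 1))) ⊓ Φ π := rfl

lemma rP_def (P : S → S → unitInterval) (s : S) :
    rP P s = ⨆ (π : ℕ → S) (_ : π 0 = s), ⨅ i, P (π i) (π (i + 1)) := rfl

/-- Step lemma -/
lemma until_step (P : S → S → unitInterval) (B C : S → unitInterval) (s u : S) :
    (C s ⊓ P s u) ⊓ Po P (untilProp B C) u ≤ Po P (untilProp B C) s := by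
  rw [Po_def]
  simp only [inf_iSup_eq]
  refine iSup_le fun π => iSup_le fun h => ?_
  set π' : ℕ → S := fun n => match n with | 0 => s | i+1 => π i with hπ'
  refine le_trans ?_ (le_iSup_of_le π' (le_iSup_of_le (rfl : π' 0 = s) le_rfl))
  refine le_inf (le_iInf fun i => ?_) ?_
  · cases i with
    | zero =>
        show _ ≤ P s (π 0)
        rw [h]
        exact inf_le_left.trans inf_le_right
    | succ m =>
        show _ ≤ P (π m) (π (m+1))
        exact inf_le_right.trans (inf_le_left.trans (iInf_le _ m))
  · have h1 : (C s ⊓ P s u) ⊓ ((⨅ i, P (π i) (π (i+1))) ⊓ untilProp B C π)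
        ≤ C s ⊓ untilProp B C π :=
      le_inf (inf_le_left.trans inf_le_left) (inf_le_right.trans inf_le_right)
    refine h1.trans ?_
    rw [untilProp, inf_iSup_eq]
    refine iSup_le fun j => ?_
    refine le_trans ?_ (le_iSup (fun j => B (π' j) ⊓ ⨅ i ∈ Finset.range j, C (π' i)) (j+1))
    rw [binf_range_succ (fun i => C (π' i)) j]
    refine le_inf (inf_le_right.trans inf_le_left) (le_inf inf_le_left ?_)
    refine le_iInf₂ fun i hi => ?_
    show _ ≤ C (π i)
    exact inf_le_right.trans (inf_le_right.trans (iInf₂_le i hi))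

/-- key lemma for direction ≥ -/
lemma pow_le_Po (P : S → S → unitInterval) (B C : S → unitInterval) :
    ∀ (k : ℕ) (s t : S),
      matPow (matComp (diagMat C) P) k s t ⊓ (B t ⊓ rP P t) ≤ Po P (untilProp B C) s := by
  intro k
  induction k with
  | zero =>
      intro s t
      by_cases h : s = t
      · subst h
        show matId s s ⊓ _ ≤ _
        rw [show matId s s = 1 from if_pos rfl, my_one_inf, rP_def]
        simp only [inf_iSup_eq]
        refine iSup_le fun π => iSup_le fun hp => ?_
        refine le_trans ?_ (le_iSup_of_le π (le_iSup_of_le hp le_rfl))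
        refine le_inf inf_le_right ?_
        refine le_trans ?_ (le_iSup (fun j => B (π j) ⊓ ⨅ i ∈ Finset.range j, C (π i)) 0)
        simp only [Finset.range_zero, Finset.notMem_empty, iInf_false, iInf_top, inf_top_eq]
        rw [hp]
        exact inf_le_left
      · show matId s t ⊓ _ ≤ _
        rw [show matId s t = 0 from if_neg h, my_zero_inf]
        exact unitInterval.nonneg'
  | succ k ih =>
      intro s t
      rw [matPow_succ_left]
      show (⨆ u, matComp (diagMat C) P s u ⊓ matPow (matComp (diagMat C) P) k u t) ⊓ _ ≤ _
      rw [iSup_inf_eq]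
      refine iSup_le fun u => ?_
      have h1 : (matComp (diagMat C) P s u ⊓ matPow (matComp (diagMat C) P) k u t)
          ⊓ (B t ⊓ rP P t) ≤ (C s ⊓ P s u) ⊓ Po P (untilProp B C) u := by
        refine le_inf (le_trans (inf_le_left.trans inf_le_left) (le_of_eq (comp_diag_s8 P C s u))) ?_
        exact le_trans (le_inf (inf_le_left.trans inf_le_right) inf_le_right) (ih u t)
      exact h1.trans (until_step P B C s u)

/-- key lemma for direction ≤ -/
lemma path_le_pow (P : S → S → unitInterval) (C : S → unitInterval) (π : ℕ → S) :
    ∀ j : ℕ, (⨅ i, P (π i) (π (i+1))) ⊓ (⨅ i ∈ Finset.range j, C (π i)) ≤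
      matPow (matComp (diagMat C) P) j (π 0) (π j) := by
  intro j
  induction j with
  | zero =>
      show _ ≤ matId (π 0) (π 0)
      rw [show matId (π 0) (π 0) = 1 from if_pos rfl]
      exact unitInterval.le_one'
  | succ j ih =>
      show _ ≤ ⨆ u, matPow (matComp (diagMat C) P) j (π 0) u ⊓ matComp (diagMat C) P u (π (j+1))
      refine le_trans ?_ (le_iSup _ (π j))
      rw [comp_diag_s8 P C (π j) (π (j+1)), Finset.range_add_one, Finset.iInf_insert]
      refine le_inf (le_trans (le_inf inf_le_left (inf_le_right.trans inf_le_right)) ih) ?_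
      exact le_inf (inf_le_right.trans inf_le_left) (inf_le_left.trans (iInf_le _ j))

end MyAux

/-- For a finite GPKS and fuzzy states `B, C`, the unbounded
constrained reachability possibility satisfies
`Po(s ⊨ C U B) = ( (D_C ∘ P)* ∘ D_B ∘ r_P )(s)`, where
`(C U B)(π) = sup_{j≥0} ( B(π_j) ∧ inf_{0≤i<j} C(π_i) )`. -/
theorem Po_until_eq {S : Type*} [Fintype S] [Nonempty S]
    {AP : Type*} [Fintype AP]
    (P : S → S → unitInterval) (Init : S → unitInterval) (L : S → AP → unitInterval)
    (B C : S → unitInterval) (s : S) :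
    Po P (fun π => ⨆ j : ℕ, B (π j) ⊓ ⨅ i ∈ Finset.range j, C (π i)) s =
      matVec (matComp (reflTransClos (matComp (diagMat C) P)) (diagMat B)) (rP P) s := by
  show Po P (untilProp B C) s = _
  have hRHS : matVec (matComp (reflTransClos (matComp (diagMat C) P)) (diagMat B)) (rP P) s
      = ⨆ t, (⨆ u, (⨆ k, matPow (matComp (diagMat C) P) k s u) ⊓ diagMat B u t) ⊓ rP P t := rfl
  rw [hRHS]
  refine le_antisymm ?_ ?_
  · -- ≤
    rw [Po_def]
    refine iSup_le fun π => iSup_le fun h => ?_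
    subst h
    rw [untilProp, inf_iSup_eq]
    refine iSup_le fun j => ?_
    refine le_trans ?_ (le_iSup _ (π j))
    refine le_inf ?_ ?_
    · refine le_trans ?_ (le_iSup _ (π j))
      refine le_inf ?_ ?_
      · refine le_trans ?_ (le_iSup (fun k => matPow (matComp (diagMat C) P) k (π 0) (π j)) j)
        refine le_trans (le_inf inf_le_left (inf_le_right.trans inf_le_right))
          (path_le_pow P C π j)
      · rw [show diagMat B (π j) (π j) = B (π j) from if_pos rfl]
        exact inf_le_right.trans inf_le_left
    · refine inf_le_left.trans ?_
      rw [rP_def]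
      refine le_trans ?_ (le_iSup_of_le (fun i => π (j + i)) (le_iSup_of_le rfl le_rfl))
      refine le_iInf fun i => ?_
      exact iInf_le _ (j + i)
  · -- ≥
    refine iSup_le fun t => ?_
    rw [iSup_inf_eq]
    refine iSup_le fun u => ?_
    by_cases hu : u = t
    · subst hu
      rw [show diagMat B u u = B u from if_pos rfl, iSup_inf_eq, iSup_inf_eq]
      refine iSup_le fun k => ?_
      exact (le_of_eq (inf_assoc _ _ _)).trans (pow_le_Po P B C k s u)
    · have h0 : diagMat B u t = 0 := if_neg hu
      calc ((⨆ k, matPow (matComp (diagMat C) P) k s u) ⊓ diagMat B u t) ⊓ rP P t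
          ≤ diagMat B u t := inf_le_left.trans inf_le_right
        _ = 0 := h0
        _ ≤ _ := unitInterval.nonneg'
end

section
/- Let M=(S,P,I,AP,L) be a finite generalized possibilistic Kripke structure and B : S → [0,1] a fuzzy state. Then for every state s ∈ S, Po(s ⊨ □◇B) = sup_{t∈S} ( B(t) ∧ Po(s ⊨ □◇{t}) ), where Po(s ⊨ □◇{t}) is the supremum of inf_{i≥0} P(π_i,π_{i+1}) over all infinite sequences π with π₀ = s in which t occurs infinitely often. -/
open unitInterval

open Classical in
private lemma key_exists_max_inf_state {S : Type*} [Fintype S] (B : S → unitInterval)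
    (π : ℕ → S) :
    ∃ t : S, (∀ i : ℕ, ∃ j, i ≤ j ∧ π j = t) ∧
      (⨅ i : ℕ, ⨆ j : ℕ, ⨆ _ : i ≤ j, B (π j)) ≤ B t := by
  -- the set of states visited infinitely often
  set T : Set S := {t | ∀ i : ℕ, ∃ j, i ≤ j ∧ π j = t} with hT
  -- T is nonempty by pigeonhole
  obtain ⟨u, hu⟩ := Finite.exists_infinite_fiber π
  have huT : u ∈ T := by
    intro i
    have hu' : (π ⁻¹' {u}).Infinite := Set.infinite_coe_iff.mp hu
    obtain ⟨j, hj, hji⟩ := hu'.exists_gt i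
    exact ⟨j, le_of_lt hji, hj⟩
  -- pick t ∈ T maximizing B
  have hfin : T.Finite := Set.toFinite T
  obtain ⟨t, htT, htmax⟩ := Set.exists_max_image T B hfin ⟨u, huT⟩
  refine ⟨t, htT, ?_⟩
  -- bound N after which π stays in T
  have hbound : ∀ v : S, ∃ N : ℕ, v ∈ T ∨ ∀ j, N ≤ j → π j ≠ v := by
    intro v
    by_cases hv : v ∈ T
    · exact ⟨0, Or.inl hv⟩
    · simp only [hT, Set.mem_setOf_eq, not_forall] at hv
      obtain ⟨i, hi⟩ := hv
      refine ⟨i, Or.inr fun j hj hne => hi ⟨j, hj, hne⟩⟩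
  choose f hf using hbound
  set N := Finset.univ.sup f with hN
  have hmem : ∀ j, N ≤ j → π j ∈ T := by
    intro j hj
    rcases hf (π j) with h | h
    · exact h
    · exact absurd rfl (h j (le_trans (Finset.le_sup (Finset.mem_univ (π j))) hj))
  calc (⨅ i : ℕ, ⨆ j : ℕ, ⨆ _ : i ≤ j, B (π j)) ≤ ⨆ j : ℕ, ⨆ _ : N ≤ j, B (π j) :=
        iInf_le _ N
    _ ≤ B t := by
        apply iSup₂_le
        intro j hj
        exact htmax _ (hmem j hj)

/-- For a finite GPKS and a fuzzy state `B`, for every state `s`,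
`Po(s ⊨ □◇B) = sup_{t∈S} ( B(t) ∧ Po(s ⊨ □◇{t}) )`, where `Po(s ⊨ □◇{t})` is the
supremum of `inf_{i≥0} P(π_i,π_{i+1})` over all infinite sequences `π` with `π₀ = s`
in which `t` occurs infinitely often. -/
theorem Po_repeated_reach_fuzzy_via_states {S : Type*} [Fintype S] [Nonempty S]
    {AP : Type*} [Fintype AP]
    (P : S → S → unitInterval) (Init : S → unitInterval) (L : S → AP → unitInterval)
    (B : S → unitInterval) (s : S) :
    Po P (fun π => ⨅ i : ℕ, ⨆ j : ℕ, ⨆ _ : i ≤ j, B (π j)) s =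
      ⨆ t : S, B t ⊓
        ⨆ (π : ℕ → S) (_ : π 0 = s ∧ ∀ i : ℕ, ∃ j, i ≤ j ∧ π j = t),
          ⨅ i, P (π i) (π (i + 1)) := by
  apply le_antisymm
  · -- LHS ≤ RHS
    apply iSup₂_le
    intro π hπ
    obtain ⟨t, ht, hBt⟩ := key_exists_max_inf_state B π
    apply le_iSup_of_le t
    refine le_inf (le_trans inf_le_right hBt) ?_
    exact le_trans inf_le_left (le_iSup₂_of_le π ⟨hπ, ht⟩ le_rfl)
  · -- RHS ≤ LHS
    apply iSup_le
    intro t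
    rw [inf_iSup_eq]
    apply iSup_le
    intro π
    rw [inf_iSup_eq]
    apply iSup_le
    rintro ⟨hπ, ht⟩
    apply le_iSup₂_of_le π hπ
    refine le_inf inf_le_right (le_trans inf_le_left ?_)
    apply le_iInf
    intro i
    obtain ⟨j, hij, hj⟩ := ht i
    exact le_iSup₂_of_le j hij (le_of_eq (congrArg B hj).symm)
end

section
/- Let M=(S,P,I,AP,L) be a finite generalized possibilistic Kripke structure and B : S → [0,1] a fuzzy state. Then for every state s ∈ S, the repeated reachability possibility satisfies Po(s ⊨ □◇B) = ( P⁺ ∘ diag(P⁺(t,t))_{t∈S} ∘ B )(s), i.e. Po(s ⊨ □◇B) = sup_{t∈S} ( P⁺(s,t) ∧ P⁺(t,t) ∧ B(t) ). -/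
open unitInterval

section AuxLemmas

variable {S : Type*} [Fintype S] [Nonempty S]

/-- Any infinite path bounds the matrix power from below. -/
theorem aux_infle_matPow (P : S → S → unitInterval) (π : ℕ → S) :
    ∀ n, (⨅ i, P (π i) (π (i + 1))) ≤ matPow P n (π 0) (π n) := by
  intro n
  induction n with
  | zero => simp [matPow, matId, le_one']
  | succ n ih =>
    have h1 : (⨅ i, P (π i) (π (i + 1))) ≤ matPow P n (π 0) (π n) ⊓ P (π n) (π (n + 1)) :=
      le_inf ih (iInf_le _ n)
    exact h1.trans (le_iSup (fun u => matPow P n (π 0) u ⊓ P u (π (n + 1))) (π n))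

/-- Matrix powers are bounded above by the weight of some finite path. -/
theorem aux_exists_path (P : S → S → unitInterval) :
    ∀ (n : ℕ) (s t : S), ∃ f : ℕ → S, f 0 = s ∧ f (n + 1) = t ∧
      matPow P (n + 1) s t ≤ ⨅ i : Fin (n + 1), P (f i) (f (i + 1)) := by
  intro n
  induction n with
  | zero =>
    intro s t
    classical
    refine ⟨fun j => if j = 0 then s else t, by simp, by simp, ?_⟩
    apply le_iInf
    intro i
    have hi : (i : ℕ) = 0 := by omega
    simp only [hi]
    simp only [matPow, matComp, matId]
    apply iSup_le
    intro u
    by_cases hu : s = u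
    · subst hu
      simp [le_one', inf_of_le_right (le_one' : P s t ≤ 1)]
    · simp [hu]
  | succ n ih =>
    intro s t
    classical
    obtain ⟨u, hu⟩ := Finite.exists_max (fun u => matPow P (n + 1) s u ⊓ P u t)
    obtain ⟨f, hf0, hfn, hfb⟩ := ih s u
    refine ⟨fun j => if j = n + 2 then t else f j, by simp [hf0], by simp, ?_⟩
    have hle : matPow P (n + 2) s t ≤ matPow P (n + 1) s u ⊓ P u t := iSup_le hu
    apply le_iInf
    intro i
    rcases Nat.lt_or_ge (i : ℕ) (n + 1) with h | h
    · have h1 : (i : ℕ) ≠ n + 2 := by omega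
      have h2 : (i : ℕ) + 1 ≠ n + 2 := by omega
      simp only [if_neg h1, if_neg h2]
      refine hle.trans (inf_le_left.trans (hfb.trans ?_))
      have := iInf_le (fun j : Fin (n + 1) => P (f j) (f (j + 1))) ⟨i, h⟩
      simpa using this
    · have h1 : (i : ℕ) = n + 1 := by omega
      have e1 : (i : ℕ) ≠ n + 2 := by omega
      have e2 : (i : ℕ) + 1 = n + 2 := by omega
      show matPow P (n + 2) s t ≤
        P (if (i : ℕ) = n + 2 then t else f i) (if (i : ℕ) + 1 = n + 2 then t else f ((i : ℕ) + 1))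
      rw [if_neg e1, if_pos e2, h1, hfn]
      exact hle.trans inf_le_right

end AuxLemmas

/-- For a finite GPKS and a fuzzy state `B`, the repeated
reachability possibility satisfies
`Po(s ⊨ □◇B) = ( P⁺ ∘ diag(P⁺(t,t))_{t∈S} ∘ B )(s) = sup_{t∈S} ( P⁺(s,t) ∧ P⁺(t,t) ∧ B(t) )`. -/
theorem Po_repeated_reach_eq {S : Type*} [Fintype S] [Nonempty S]
    {AP : Type*} [Fintype AP]
    (P : S → S → unitInterval) (Init : S → unitInterval) (L : S → AP → unitInterval)
    (B : S → unitInterval) (s : S) :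
    Po P (fun π => ⨅ i : ℕ, ⨆ j : ℕ, ⨆ _ : i ≤ j, B (π j)) s =
      ⨆ t : S, transClos P s t ⊓ transClos P t t ⊓ B t := by
  classical
  apply le_antisymm
  · -- Po ≤ sup
    simp only [Po]
    apply iSup_le; intro π; apply iSup_le; intro hπ
    set T : Set S := {u | ∀ N, ∃ j, N ≤ j ∧ π j = u} with hTdef
    have h1 : ∀ u : S, ∃ N, u ∉ T → ∀ j, N ≤ j → π j ≠ u := by
      intro u
      by_cases hu : u ∈ T
      · exact ⟨0, fun h => absurd hu h⟩
      · simp only [hTdef, Set.mem_setOf_eq] at hu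
        push_neg at hu
        obtain ⟨N, hN⟩ := hu
        exact ⟨N, fun _ => hN⟩
    choose g hg using h1
    obtain ⟨u₀, hu₀⟩ := Finite.exists_max g
    have hTmem : ∀ j, g u₀ ≤ j → π j ∈ T := by
      intro j hj
      by_contra hc
      exact hg (π j) hc j (le_trans (hu₀ (π j)) hj) rfl
    haveI : Nonempty {u // u ∈ T} := ⟨⟨π (g u₀), hTmem (g u₀) le_rfl⟩⟩
    obtain ⟨⟨t, ht⟩, htmax⟩ := Finite.exists_max (fun u : {u // u ∈ T} => B u.1)
    apply le_iSup_of_le t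
    refine le_inf (le_inf ?_ ?_) ?_
    · -- ≤ transClos P s t
      refine inf_le_left.trans ?_
      obtain ⟨j, hj1, hj2⟩ := ht 1
      have h2 := aux_infle_matPow P π j
      rw [hπ, hj2] at h2
      refine h2.trans ?_
      show matPow P j s t ≤ ⨆ k, matPow P (k + 1) s t
      have h3 : matPow P j s t = matPow P ((j - 1) + 1) s t := by
        congr 1; omega
      rw [h3]
      exact le_iSup (fun k => matPow P (k + 1) s t) (j - 1)
    · -- ≤ transClos P t t
      refine inf_le_left.trans ?_
      obtain ⟨n, -, hn⟩ := ht 0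
      obtain ⟨m, hm1, hm2⟩ := ht (n + 1)
      have haσ : (⨅ i, P (π i) (π (i + 1))) ≤
          ⨅ i, P (π (n + i)) (π (n + i + 1)) := by
        apply le_iInf; intro i
        exact iInf_le (fun i => P (π i) (π (i + 1))) (n + i)
      have h2 := aux_infle_matPow P (fun i => π (n + i)) (m - n)
      rw [show n + 0 = n from rfl, hn, show n + (m - n) = m by omega, hm2] at h2
      have h2' : (⨅ i, P (π (n + i)) (π (n + i + 1))) ≤ matPow P (m - n) t t := by
        refine le_trans (le_iInf fun i => ?_) h2
        have := iInf_le (fun i => P (π (n + i)) (π (n + i + 1))) i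
        simpa [Nat.add_assoc] using this
      refine (haσ.trans h2').trans ?_
      show matPow P (m - n) t t ≤ ⨆ k, matPow P (k + 1) t t
      have h3 : matPow P (m - n) t t = matPow P ((m - n - 1) + 1) t t := by
        congr 1; omega
      rw [h3]
      exact le_iSup (fun k => matPow P (k + 1) t t) (m - n - 1)
    · -- ≤ B t
      refine inf_le_right.trans ?_
      refine (iInf_le _ (g u₀)).trans ?_
      apply iSup_le; intro j; apply iSup_le; intro hj
      exact htmax ⟨π j, hTmem j hj⟩
  · -- sup ≤ Po
    apply iSup_le; intro t
    have heq : transClos P s t ⊓ transClos P t t ⊓ B t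
        = ⨆ k, ⨆ m, matPow P (k + 1) s t ⊓ matPow P (m + 1) t t ⊓ B t := by
      simp only [transClos, iSup_inf_eq, inf_iSup_eq]
      exact iSup_comm
    rw [heq]
    apply iSup_le; intro k; apply iSup_le; intro m
    obtain ⟨f, hf0, hfK, hf⟩ := aux_exists_path P k s t
    obtain ⟨gg, hg0, hgM, hg⟩ := aux_exists_path P m t t
    set π : ℕ → S := fun j => if j < k + 1 then f j else gg ((j - (k + 1)) % (m + 1))
      with hπdef
    have hπ0 : π 0 = s := by simp [hπdef, hf0]
    simp only [Po]
    refine le_iSup₂_of_le π hπ0 (le_inf ?_ ?_)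
    · -- edge bound
      apply le_iInf; intro i
      rcases Nat.lt_or_ge i (k + 1) with h | h
      · have hπi : π i = f i := by simp only [hπdef]; rw [if_pos h]
        have hπi1 : π (i + 1) = f (i + 1) := by
          rcases Nat.lt_or_ge (i + 1) (k + 1) with h2 | h2
          · simp only [hπdef]; rw [if_pos h2]
          · have h3 : i + 1 = k + 1 := by omega
            simp only [hπdef]
            rw [if_neg (by omega), h3, Nat.sub_self, Nat.zero_mod, hg0, ← hfK]
        rw [hπi, hπi1]
        refine inf_le_left.trans (inf_le_left.trans (hf.trans ?_))
        have := iInf_le (fun j : Fin (k + 1) => P (f j) (f (j + 1))) ⟨i, h⟩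
        simpa using this
      · have hrM : (i - (k + 1)) % (m + 1) < m + 1 := Nat.mod_lt _ (Nat.succ_pos m)
        have hπi : π i = gg ((i - (k + 1)) % (m + 1)) := by
          simp only [hπdef]; rw [if_neg (by omega)]
        have hmod : (i + 1 - (k + 1)) % (m + 1) = ((i - (k + 1)) % (m + 1) + 1) % (m + 1) := by
          rw [show i + 1 - (k + 1) = (i - (k + 1)) + 1 by omega, Nat.mod_add_mod]
        have hπi1 : π (i + 1) = gg ((i - (k + 1)) % (m + 1) + 1) := by
          simp only [hπdef]
          rw [if_neg (by omega), hmod]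
          rcases Nat.lt_or_ge ((i - (k + 1)) % (m + 1) + 1) (m + 1) with h2 | h2
          · rw [Nat.mod_eq_of_lt h2]
          · have h3 : (i - (k + 1)) % (m + 1) + 1 = m + 1 := by omega
            rw [h3, Nat.mod_self, hg0, hgM]
        rw [hπi, hπi1]
        refine inf_le_left.trans (inf_le_right.trans (hg.trans ?_))
        have := iInf_le (fun j : Fin (m + 1) => P (gg j) (gg (j + 1)))
          ⟨(i - (k + 1)) % (m + 1), hrM⟩
        simpa using this
    · -- □◇B bound
      apply le_iInf; intro i
      have hj : π (k + 1 + i * (m + 1)) = t := by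
        simp only [hπdef]
        rw [if_neg (Nat.not_lt.mpr (Nat.le_add_right (k + 1) _)),
          Nat.add_sub_cancel_left, Nat.mul_mod_left, hg0]
      have hij : i ≤ k + 1 + i * (m + 1) :=
        (Nat.le_mul_of_pos_right i (Nat.succ_pos m)).trans (Nat.le_add_left _ _)
      refine le_iSup₂_of_le (k + 1 + i * (m + 1)) hij ?_
      rw [hj]
      exact inf_le_right
end

section
/- Let M=(S,P,I,AP,L) be a finite generalized possibilistic Kripke structure with labeling map L : S → Σ into a finite alphabet Σ. Let A = (Q,Σ,δ,q₀,F) be a deterministic fuzzy finite automaton (δ : Q×Σ → Q a deterministic transition function, q₀ ∈ Q the initial state, F : Q → [0,1] a fuzzy set of final states), and let P : Σ^ω → [0,1] be the fuzzy safety property P(σ) = inf_{n≥0} F(δ*(q₀, σ₀σ₁⋯σₙ)), where δ* is the extension of δ to finite words. Then for every state s ∈ S, Po^M(s ⊨ P) = Po^{M⊗A}((s,q_s) ⊨ □B), where q_s = δ(q₀, L(s)), B(s,q) = F(q), the product GPKS M⊗A has state set S×Q and transition possibilities P'((s,q),(s',q')) = P(s,s') if q' = δ(q, L(s')) and 0 otherwise.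 Explicitly: sup_{π∈S^ω, π₀=s} ( inf_{i≥0} P(π_i,π_{i+1}) ∧ inf_{n≥0} F(δ*(q₀, L(π₀)⋯L(π_n))) ) = sup over infinite sequences in S×Q starting at (s,q_s) of ( inf_{i≥0} P'(·,·) ∧ inf_{j≥0} B(·) ). -/
open unitInterval

/-- `dstar δ q w n = δ*(q, w₀w₁⋯wₙ)`: the extension of a deterministic transition
function `δ` to the finite word consisting of the first `n + 1` letters of `w`. -/
def dstar {Q A : Type*} (δ : Q → A → Q) (q : Q) (w : ℕ → A) : ℕ → Q
  | 0 => δ q (w 0)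
  | n + 1 => δ (dstar δ q w n) (w (n + 1))

/-- Let `M` be a finite GPKS with labeling `L : S → Σ`, let
`A = (Q,Σ,δ,q₀,F)` be a deterministic fuzzy finite automaton and let
`P(σ) = inf_{n≥0} F(δ*(q₀, σ₀⋯σₙ))` be the associated fuzzy (regular) safety
property. Then `Po^M(s ⊨ P) = Po^{M⊗A}((s, q_s) ⊨ □B)` where `q_s = δ(q₀, L(s))`,
`B(s,q) = F(q)`, and the product GPKS `M⊗A` has transitions
`P'((s,q),(s',q')) = P(s,s')` if `q' = δ(q, L(s'))` and `0` otherwise. -/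
theorem Po_fuzzy_regular_safety {S Q A : Type*}
    [Fintype S] [Nonempty S] [Fintype Q] [Nonempty Q] [DecidableEq Q] [Fintype A]
    (P : S → S → unitInterval) (Init : S → unitInterval) (L : S → A)
    (δ : Q → A → Q) (q₀ : Q) (F : Q → unitInterval) (s : S) :
    (⨆ (π : ℕ → S) (_ : π 0 = s),
        (⨅ i, P (π i) (π (i + 1))) ⊓ ⨅ n, F (dstar δ q₀ (fun i => L (π i)) n)) =
      ⨆ (ρ : ℕ → S × Q) (_ : ρ 0 = (s, δ q₀ (L s))),
        (⨅ i, (if (ρ (i + 1)).2 = δ (ρ i).2 (L (ρ (i + 1)).1)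
                then P (ρ i).1 (ρ (i + 1)).1 else 0)) ⊓
          ⨅ j, F (ρ j).2 := by
  apply le_antisymm
  · refine iSup₂_le fun π hπ => ?_
    refine le_iSup₂_of_le (fun i => (π i, dstar δ q₀ (fun j => L (π j)) i)) ?_ ?_
    · simp [hπ, dstar]
    · apply inf_le_inf
      · refine le_iInf fun i => ?_
        have h : dstar δ q₀ (fun j => L (π j)) (i + 1)
            = δ (dstar δ q₀ (fun j => L (π j)) i) (L (π (i + 1))) := rfl
        simp only [h, if_pos rfl]
        exact iInf_le _ i
      · exact le_rfl
  · refine iSup₂_le fun ρ hρ => ?_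
    by_cases h : ∀ i, (ρ (i + 1)).2 = δ (ρ i).2 (L (ρ (i + 1)).1)
    · have key : ∀ n, (ρ n).2 = dstar δ q₀ (fun j => L ((ρ j).1)) n := by
        intro n
        induction n with
        | zero => simp [dstar, hρ]
        | succ n ih => simp [dstar, ← ih, h n]
      refine le_iSup₂_of_le (fun i => (ρ i).1) (by simp [hρ]) ?_
      apply inf_le_inf
      · refine le_iInf fun i => ?_
        have h2 := iInf_le
          (fun i => if (ρ (i + 1)).2 = δ (ρ i).2 (L (ρ (i + 1)).1)
            then P (ρ i).1 (ρ (i + 1)).1 else 0) i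
        rwa [if_pos (h i)] at h2
      · refine le_iInf fun n => ?_
        rw [← key n]
        exact iInf_le _ n
    · push_neg at h
      obtain ⟨i, hi⟩ := h
      refine le_trans inf_le_left (le_trans (iInf_le _ i) ?_)
      rw [if_neg hi]
      exact unitInterval.nonneg'
end

section
/- Let M=(S,P,I,AP,L) be a finite generalized possibilistic Kripke structure with labeling map L : S → Σ into a finite alphabet Σ, let A = (Q,Σ,δ,q₀,F) be a deterministic fuzzy finite automaton, and let P(σ) = inf_{n≥0} F(δ*(q₀, σ₀σ₁⋯σₙ)) be the associated fuzzy safety property. Then the necessity measure satisfies Ne^M(s ⊨ P) = 1 − Po^{M⊗A}((s,q_s) ⊨ ◇(¬B)), where Ne^M(s ⊨ P) = inf_{π∈S^ω, π₀=s} ( (1 − inf_{i≥0} P(π_i,π_{i+1})) ∨ P(L(π₀)L(π₁)⋯) ), q_s = δ(q₀, L(s)), B(s,q) = F(q), (¬B)(s,q) = 1 − F(q), and the product GPKS M⊗A has transition possibilities P'((s,q),(s',q')) = P(s,s') if q' = δ(q, L(s')) and 0 otherwise. -/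
open unitInterval

noncomputable def symmIso : unitInterval ≃o unitIntervalᵒᵈ where
  toFun x := OrderDual.toDual (symm x)
  invFun y := symm (OrderDual.ofDual y)
  left_inv x := symm_symm x
  right_inv y := congrArg OrderDual.toDual (symm_symm _)
  map_rel_iff' := by intro a b; exact symm_le_symm

lemma symm_iSup' {ι : Sort*} (f : ι → unitInterval) : symm (⨆ i, f i) = ⨅ i, symm (f i) :=
  congrArg OrderDual.ofDual (symmIso.map_iSup f)

lemma symm_inf' (a b : unitInterval) : symm (a ⊓ b) = symm a ⊔ symm b :=
  congrArg OrderDual.ofDual (symmIso.map_inf a b)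

/-- With `M`, `A` and the fuzzy safety property
`P(σ) = inf_{n≥0} F(δ*(q₀, σ₀⋯σₙ))` as in Statement 13, the necessity measure
satisfies `Ne^M(s ⊨ P) = 1 − Po^{M⊗A}((s,q_s) ⊨ ◇(¬B))`, where
`Ne^M(s ⊨ P) = inf_{π, π₀=s} ( (1 − inf_i P(π_i,π_{i+1})) ∨ P(L(π₀)L(π₁)⋯) )`,
`q_s = δ(q₀, L(s))`, `B(s,q) = F(q)` and `(¬B)(s,q) = 1 − F(q)`. -/
theorem Ne_fuzzy_regular_safety {S Q A : Type*}
    [Fintype S] [Nonempty S] [Fintype Q] [Nonempty Q] [DecidableEq Q] [Fintype A]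
    (P : S → S → unitInterval) (Init : S → unitInterval) (L : S → A)
    (δ : Q → A → Q) (q₀ : Q) (F : Q → unitInterval) (s : S) :
    (⨅ (π : ℕ → S) (_ : π 0 = s),
        unitInterval.symm (⨅ i, P (π i) (π (i + 1))) ⊔
          ⨅ n, F (dstar δ q₀ (fun i => L (π i)) n)) =
      unitInterval.symm
        (⨆ (ρ : ℕ → S × Q) (_ : ρ 0 = (s, δ q₀ (L s))),
          (⨅ i, (if (ρ (i + 1)).2 = δ (ρ i).2 (L (ρ (i + 1)).1)
                  then P (ρ i).1 (ρ (i + 1)).1 else 0)) ⊓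
            ⨆ j, unitInterval.symm (F (ρ j).2)) := by
  simp only [symm_iSup', symm_inf', symm_symm]
  apply le_antisymm
  · apply le_iInf; intro ρ; apply le_iInf; intro hρ
    by_cases H : ∀ i, (ρ (i + 1)).2 = δ (ρ i).2 (L (ρ (i + 1)).1)
    · have hkey : ∀ j, (ρ j).2 = dstar δ q₀ (fun i => L (ρ i).1) j := by
        intro j
        induction j with
        | zero => show (ρ 0).2 = δ q₀ (L (ρ 0).1); rw [hρ]
        | succ n ih =>
          show (ρ (n + 1)).2 = δ (dstar δ q₀ (fun i => L (ρ i).1) n) (L (ρ (n + 1)).1)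
          rw [← ih, ← H n]
      refine iInf_le_of_le (fun i => (ρ i).1) (iInf_le_of_le (by show (ρ 0).1 = s; rw [hρ]) (le_of_eq ?_))
      have h1 : (⨅ i, if (ρ (i + 1)).2 = δ (ρ i).2 (L (ρ (i + 1)).1)
          then P (ρ i).1 (ρ (i + 1)).1 else 0) = ⨅ i, P (ρ i).1 (ρ (i + 1)).1 :=
        iInf_congr fun i => if_pos (H i)
      rw [h1]
      congr 1
      exact iInf_congr fun n => congrArg F (hkey n).symm
    · push_neg at H
      obtain ⟨i, hi⟩ := H
      have h0 : (⨅ i, if (ρ (i + 1)).2 = δ (ρ i).2 (L (ρ (i + 1)).1)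
          then P (ρ i).1 (ρ (i + 1)).1 else 0) ≤ 0 := by
        refine le_trans (iInf_le _ i) ?_
        rw [if_neg hi]
      refine le_trans le_one' (le_trans (le_symm_comm.mpr ?_) le_sup_left)
      rw [symm_one]; exact h0
  · apply le_iInf; intro π; apply le_iInf; intro hπ
    refine iInf_le_of_le (fun i => (π i, dstar δ q₀ (fun j => L (π j)) i))
      (iInf_le_of_le ?_ (le_of_eq ?_))
    · show (π 0, δ q₀ (L (π 0))) = (s, δ q₀ (L s)); rw [hπ]
    · congr 1
      exact congrArg unitInterval.symm (iInf_congr fun i => if_pos rfl)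
end

section
/- Let M=(S,P,I,AP,L) be a finite generalized possibilistic Kripke structure with labeling map L : S → Σ into a finite alphabet Σ, and let A = (Q,Σ,δ,J,F) be a fuzzy Büchi automaton with δ : Q×Σ×Q → [0,1], J, F : Q → [0,1]. Let P = L_ω(A) : Σ^ω → [0,1] be the fuzzy ω-regular language accepted by A, i.e. L_ω(A)(σ) = sup over all state sequences q₀q₁q₂⋯ in Q of ( J(q₀) ∧ inf_{i≥0} δ(q_i, σ_{i+1}, q_{i+1}) ∧ inf_{i≥0} sup_{j≥i} F(q_j) ). Then for every state s ∈ S, Po^M(s ⊨ P) = Po^{M_s⊗A}(I' ⊨ □◇B), where the product GPKS M_s⊗A has state set S×Q, initial distribution I'(t,q) = [t = s] ∧ sup_{q₀∈Q} ( J(q₀) ∧ δ(q₀, L(t), q) ), transition possibilities P'((t,q),(t',q')) = P(t,t') ∧ δ(q, L(t'), q'), B(t,q) = F(q), and Po^{M_s⊗A}(I' ⊨ □◇B) = sup over infinite sequences ρ in (S×Q)^ω of ( I'(ρ₀) ∧ inf_{i≥0} P'(ρ_i, ρ_{i+1}) ∧ inf_{i≥0} sup_{j≥i} B(ρ_j)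 ). -/
open unitInterval

/-- The fuzzy ω-regular language accepted by a fuzzy Büchi automaton
`A = (Q,Σ,δ,J,F)`:
`L_ω(A)(σ) = sup_{q₀q₁⋯} ( J(q₀) ∧ inf_{i≥0} δ(q_i, σ at step i, q_{i+1}) ∧ inf_{i≥0} sup_{j≥i} F(q_j) )`. -/
noncomputable def buchiLang {Q A : Type*} (δ : Q → A → Q → unitInterval)
    (J F : Q → unitInterval) (w : ℕ → A) : unitInterval :=
  ⨆ q : ℕ → Q,
    J (q 0) ⊓ (⨅ i, δ (q i) (w i) (q (i + 1))) ⊓ ⨅ i, ⨆ j, ⨆ _ : i ≤ j, F (q j)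

lemma liminf_shift {α : Type*} [CompleteLattice α] (g : ℕ → α) :
    (⨅ i, ⨆ j, ⨆ _ : i ≤ j, g j) = ⨅ i, ⨆ j, ⨆ _ : i ≤ j, g (j + 1) := by
  apply le_antisymm
  · refine le_iInf fun i => iInf_le_of_le (i + 1) (iSup₂_le fun j hj => ?_)
    obtain ⟨k, rfl⟩ := Nat.exists_eq_add_of_le hj
    exact le_iSup₂_of_le (i + k) (Nat.le_add_right i k) (le_of_eq (congrArg g (by omega)))
  · refine le_iInf fun i => iInf_le_of_le i (iSup₂_le fun j hj => ?_)
    exact le_iSup₂_of_le (j + 1) (hj.trans (Nat.le_succ j)) le_rfl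

/-- Let `M` be a finite GPKS with labeling `L : S → Σ` and
`A = (Q,Σ,δ,J,F)` a fuzzy Büchi automaton accepting `P = L_ω(A)`. Then for every
state `s`, `Po^M(s ⊨ P) = Po^{M_s⊗A}(I' ⊨ □◇B)`, where the product GPKS `M_s⊗A` has
state set `S×Q`, initial distribution `I'(t,q) = [t = s] ∧ sup_{q₀} ( J(q₀) ∧ δ(q₀,L(t),q) )`,
transitions `P'((t,q),(t',q')) = P(t,t') ∧ δ(q,L(t'),q')` and `B(t,q) = F(q)`. -/
theorem Po_fuzzy_omega_regular {S Q A : Type*}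
    [Fintype S] [Nonempty S] [Fintype Q] [Nonempty Q] [DecidableEq S] [Fintype A]
    (P : S → S → unitInterval) (Init : S → unitInterval) (L : S → A)
    (δ : Q → A → Q → unitInterval) (J F : Q → unitInterval) (s : S) :
    (⨆ (π : ℕ → S) (_ : π 0 = s),
        (⨅ i, P (π i) (π (i + 1))) ⊓ buchiLang δ J F (fun i => L (π i))) =
      ⨆ ρ : ℕ → S × Q,
        ((if (ρ 0).1 = s then (1 : unitInterval) else 0) ⊓
            ⨆ q₀ : Q, J q₀ ⊓ δ q₀ (L (ρ 0).1) (ρ 0).2) ⊓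
          (⨅ i, P (ρ i).1 (ρ (i + 1)).1 ⊓ δ (ρ i).2 (L (ρ (i + 1)).1) (ρ (i + 1)).2) ⊓
          ⨅ i, ⨆ j, ⨆ _ : i ≤ j, F (ρ j).2 := by
  apply le_antisymm
  · refine iSup_le fun pi => iSup_le fun hpi => ?_
    rw [buchiLang, inf_iSup_eq]
    refine iSup_le fun q => ?_
    refine le_trans ?_ (le_iSup _ (fun i => (pi i, q (i + 1))))
    dsimp only
    rw [if_pos hpi]
    refine le_inf (le_inf ?_ ?_) ?_
    · refine le_inf le_top ?_
      refine le_trans ?_ (le_iSup _ (q 0))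
      refine le_trans inf_le_right (le_trans inf_le_left ?_)
      exact inf_le_inf_left _ (iInf_le _ 0)
    · refine le_iInf fun i => le_inf ?_ ?_
      · exact le_trans inf_le_left (iInf_le _ i)
      · exact le_trans inf_le_right (le_trans inf_le_left
          (le_trans inf_le_right (iInf_le _ (i + 1))))
    · refine le_trans (le_trans inf_le_right inf_le_right) ?_
      exact le_of_eq (liminf_shift (fun j => F (q j)))
  · refine iSup_le fun rho => ?_
    by_cases h : (rho 0).1 = s
    · rw [if_pos h, inf_iSup_eq, iSup_inf_eq, iSup_inf_eq]
      refine iSup_le fun q0 => ?_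
      set q : ℕ → Q := fun n => Nat.rec q0 (fun i _ => (rho i).2) n with hq
      refine le_trans ?_ (le_iSup _ (fun i => (rho i).1))
      refine le_trans ?_ (le_iSup _ h)
      rw [buchiLang]
      refine le_inf ?_ ?_
      · exact le_trans inf_le_left
          (le_trans inf_le_right (le_iInf fun i => iInf_le_of_le i inf_le_left))
      · refine le_trans ?_ (le_iSup _ q)
        refine le_inf (le_inf ?_ ?_) ?_
        · exact le_trans inf_le_left (le_trans inf_le_left (le_trans inf_le_right inf_le_left))
        · refine le_iInf fun i => ?_
          match i with
          | 0 =>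
            exact le_trans inf_le_left
              (le_trans inf_le_left (le_trans inf_le_right inf_le_right))
          | Nat.succ k =>
            exact le_trans inf_le_left (le_trans inf_le_right (iInf_le_of_le k inf_le_right))
        · refine le_trans inf_le_right ?_
          exact le_of_eq (liminf_shift (fun j => F (q j))).symm
    · rw [if_neg h]
      have h0 : ((0 : unitInterval) ⊓ ⨆ q₀ : Q, J q₀ ⊓ δ q₀ (L (rho 0).1) (rho 0).2)
          ⊓ (⨅ i, P (rho i).1 (rho (i + 1)).1 ⊓ δ (rho i).2 (L (rho (i + 1)).1) (rho (i + 1)).2)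
          ⊓ (⨅ i, ⨆ j, ⨆ _ : i ≤ j, F (rho j).2) ≤ 0 :=
        le_trans inf_le_left (le_trans inf_le_left inf_le_left)
      refine le_trans h0 ?_
      exact le_trans nonneg' (le_iSup₂_of_le (fun _ : ℕ => s) rfl le_rfl)
end

section
/- Let M=(S,P,I,AP,L) be a finite generalized possibilistic Kripke structure with labeling map L : S → Σ into a finite alphabet Σ, and let A = (Q,Σ,δ,q₀,F) be a deterministic fuzzy Büchi automaton (δ : Q×Σ → Q deterministic, q₀ initial, F : Q → [0,1]), accepting the fuzzy ω-language L_ω(A)(σ) = inf_{i≥0} sup_{j≥i} F(δ*(q₀, σ₀⋯σ_j)). Then for every state s ∈ S, Po^M(s ⊨ L_ω(A)) = Po^{M_s⊗A}((s,q_s) ⊨ □◇B), where q_s = δ(q₀, L(s)), B(t,q) = F(q), and the product GPKS has transition possibilities P'((t,q),(t',q')) = P(t,t') if q' = δ(q, L(t')) and 0 otherwise; i.e. sup_{π∈S^ω, π₀=s} ( inf_{i≥0} P(π_i,π_{i+1}) ∧ inf_{i≥0} sup_{j≥i} F(δ*(q₀, L(π₀)⋯L(π_j))) ) = sup over infinite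 sequences ρ in (S×Q)^ω with ρ₀ = (s,q_s) of ( inf_{i≥0} P'(ρ_i,ρ_{i+1}) ∧ inf_{i≥0} sup_{j≥i} B(ρ_j) ). -/
open unitInterval

set_option maxHeartbeats 1000000 in
/-- Let `M` be a finite GPKS with labeling `L : S → Σ` and
`A = (Q,Σ,δ,q₀,F)` a deterministic fuzzy Büchi automaton accepting
`L_ω(A)(σ) = inf_{i≥0} sup_{j≥i} F(δ*(q₀, σ₀⋯σ_j))`. Then for every state `s`,
`Po^M(s ⊨ L_ω(A)) = Po^{M_s⊗A}((s,q_s) ⊨ □◇B)`, where `q_s = δ(q₀, L(s))`,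
`B(t,q) = F(q)` and the product GPKS has transitions
`P'((t,q),(t',q')) = P(t,t')` if `q' = δ(q, L(t'))` and `0` otherwise. -/
theorem Po_deterministic_buchi {S Q A : Type*}
    [Fintype S] [Nonempty S] [Fintype Q] [Nonempty Q] [DecidableEq Q] [Fintype A]
    (P : S → S → unitInterval) (Init : S → unitInterval) (L : S → A)
    (δ : Q → A → Q) (q₀ : Q) (F : Q → unitInterval) (s : S) :
    (⨆ (π : ℕ → S) (_ : π 0 = s),
        (⨅ i, P (π i) (π (i + 1))) ⊓
          ⨅ i, ⨆ j, ⨆ _ : i ≤ j, F (dstar δ q₀ (fun k => L (π k)) j)) =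
      ⨆ (ρ : ℕ → S × Q) (_ : ρ 0 = (s, δ q₀ (L s))),
        (⨅ i, (if (ρ (i + 1)).2 = δ (ρ i).2 (L (ρ (i + 1)).1)
                then P (ρ i).1 (ρ (i + 1)).1 else 0)) ⊓
          ⨅ i, ⨆ j, ⨆ _ : i ≤ j, F (ρ j).2 := by
  apply le_antisymm
  · refine iSup₂_le fun π hπ => ?_
    refine le_iSup₂_of_le (fun i => (π i, dstar δ q₀ (fun k => L (π k)) i)) ?_ ?_
    · simp [dstar, hπ]
    · apply inf_le_inf
      · refine le_iInf fun i => ?_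
        have hc : (dstar δ q₀ (fun k => L (π k)) (i + 1)) =
            δ (dstar δ q₀ (fun k => L (π k)) i) (L (π (i + 1))) := rfl
        simp only [hc, if_pos]
        exact iInf_le _ i
      · exact le_refl _
  · refine iSup₂_le fun ρ hρ => ?_
    by_cases h : ∀ i, (ρ (i + 1)).2 = δ (ρ i).2 (L (ρ (i + 1)).1)
    · have key : ∀ i, (ρ i).2 = dstar δ q₀ (fun k => L ((ρ k).1)) i := by
        intro i
        induction i with
        | zero =>
          have h0 : dstar δ q₀ (fun k => L ((ρ k).1)) 0 = δ q₀ (L ((ρ 0).1)) := rfl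
          rw [h0, hρ]
        | succ n ih =>
          have hn : dstar δ q₀ (fun k => L ((ρ k).1)) (n + 1)
              = δ (dstar δ q₀ (fun k => L ((ρ k).1)) n) (L ((ρ (n + 1)).1)) := rfl
          rw [hn, h n, ih]
      refine le_iSup₂_of_le (fun i => (ρ i).1) (by show (ρ 0).1 = s; rw [hρ]) ?_
      apply inf_le_inf
      · refine le_iInf fun i => le_trans (iInf_le _ i) ?_
        rw [if_pos (h i)]
      · refine le_of_eq ?_
        refine iInf_congr fun i => iSup_congr fun j => iSup_congr fun _ => ?_
        rw [key j]
    · push_neg at h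
      obtain ⟨i, hi⟩ := h
      refine le_trans (le_trans inf_le_left (iInf_le _ i)) ?_
      rw [if_neg hi]
      exact unitInterval.nonneg'
end
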